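/- arXiv:2404.07958 — 2 statements merged into one kernel-verified Lean document; each statement's English description precedes it below -/
import Mathlib

section
/- The number of parking functions of size n whose parking permutation avoids 213, 312, and 321 equals (2n − 1)·(n−1)!. -/
open Finset

noncomputable section

/-- The parking process over the first `k` cars (cars are `0,...,k-1`, i.e. cars `1,...,k`
in 1-indexed terms): returns `some occ` where `occ` maps each spot to the car parked there
(`none` meaning empty), or `none` if some car failed to park.  Car `c` drives to its
preferred spot `f c` and parks at the first free spot with index `≥ f c`, failing if
no such spot exists. -/
def parkAux {n : ℕ} (f : Fin n → Fin n) : ℕ → Option (Fin n → Option (Fin n))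
  | 0 => some fun _ => none
  | k + 1 =>
    (parkAux f k).bind fun occ =>
      if h : k < n then
        if hS : (Finset.univ.filter fun s => f ⟨k, h⟩ ≤ s ∧ occ s = none).Nonempty then
          some (Function.update occ
            ((Finset.univ.filter fun s => f ⟨k, h⟩ ≤ s ∧ occ s = none).min' hS)
            (some ⟨k, h⟩))
        else none
      else some occ

/-- All `n` cars park successfully. -/
def AllPark {n : ℕ} (f : Fin n → Fin n) : Prop := (parkAux f n).isSome

/-- `f` is a parking function: for every `i ∈ [n]`, at least `i` cars prefer
the first `i` spots.  (Here `i : Fin n` denotes the `(i+1)`-st spot, 0-indexed.) -/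
def IsParkingFunction {n : ℕ} (f : Fin n → Fin n) : Prop :=
  ∀ i : Fin n, i.val + 1 ≤ (Finset.univ.filter fun j => f j ≤ i).card

/-- `ρ` is the parking permutation of `f`: after all cars have parked,
spot `i` is occupied by car `ρ i`. -/
def IsParkingPerm {n : ℕ} (f : Fin n → Fin n) (ρ : Equiv.Perm (Fin n)) : Prop :=
  parkAux f n = some fun i => some (ρ i)

/-- `π` contains `σ` as a pattern. -/
def ContainsPattern {n m : ℕ} (π : Equiv.Perm (Fin n)) (σ : Equiv.Perm (Fin m)) : Prop :=
  ∃ g : Fin m → Fin n, StrictMono g ∧ ∀ a b : Fin m, σ a < σ b ↔ π (g a) < π (g b)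

/-- `ρ` avoids every pattern in the list `pats`. -/
def AvoidsAll {n : ℕ} (ρ : Equiv.Perm (Fin n)) (pats : List (Equiv.Perm (Fin 3))) : Prop :=
  ∀ σ ∈ pats, ¬ ContainsPattern ρ σ

/-- The number of parking functions of size `n` whose parking permutation avoids
all patterns in `pats`. -/
def pk (n : ℕ) (pats : List (Equiv.Perm (Fin 3))) : ℕ :=
  Nat.card {f : Fin n → Fin n // IsParkingFunction f ∧
    ∃ ρ : Equiv.Perm (Fin n), IsParkingPerm f ρ ∧ AvoidsAll ρ pats}

def p123 : Equiv.Perm (Fin 3) := Equiv.ofBijective ![0, 1, 2] (by decide)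
def p132 : Equiv.Perm (Fin 3) := Equiv.ofBijective ![0, 2, 1] (by decide)
def p213 : Equiv.Perm (Fin 3) := Equiv.ofBijective ![1, 0, 2] (by decide)
def p231 : Equiv.Perm (Fin 3) := Equiv.ofBijective ![1, 2, 0] (by decide)
def p312 : Equiv.Perm (Fin 3) := Equiv.ofBijective ![2, 0, 1] (by decide)
def p321 : Equiv.Perm (Fin 3) := Equiv.ofBijective ![2, 1, 0] (by decide)


namespace PF
variable {n : ℕ} {f : Fin n → Fin n}

lemma parkAux_succ (k : ℕ) :
    parkAux f (k+1) = (parkAux f k).bind fun occ =>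
      if h : k < n then
        if hS : (Finset.univ.filter fun s => f ⟨k, h⟩ ≤ s ∧ occ s = none).Nonempty then
          some (Function.update occ
            ((Finset.univ.filter fun s => f ⟨k, h⟩ ≤ s ∧ occ s = none).min' hS)
            (some ⟨k, h⟩))
        else none
      else some occ := rfl

/-- deterministic step, forward form -/
lemma parkAux_step {k : ℕ} (hk : k < n) {occ : Fin n → Option (Fin n)}
    (ho : parkAux f k = some occ) (p : Fin n)
    (hfp : f ⟨k, hk⟩ ≤ p) (hempty : occ p = none)
    (hmin : ∀ s : Fin n, f ⟨k, hk⟩ ≤ s → occ s = none → p ≤ s) :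
    parkAux f (k+1) = some (Function.update occ p (some ⟨k, hk⟩)) := by
  have hpS : p ∈ Finset.univ.filter fun s => f ⟨k, hk⟩ ≤ s ∧ occ s = none := by
    simp [hfp, hempty]
  have hS : (Finset.univ.filter fun s => f ⟨k, hk⟩ ≤ s ∧ occ s = none).Nonempty := ⟨p, hpS⟩
  have hmin' : (Finset.univ.filter fun s => f ⟨k, hk⟩ ≤ s ∧ occ s = none).min' hS = p := by
    apply le_antisymm
    · exact Finset.min'_le _ _ hpS
    · apply Finset.le_min'
      intro y hy
      simp only [Finset.mem_filter] at hy
      exact hmin y hy.2.1 hy.2.2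
  rw [parkAux_succ, ho]
  simp [hk, hS, hmin']

/-- inversion of a successful step -/
lemma parkAux_step_inv {k : ℕ} (hk : k < n) {occ' : Fin n → Option (Fin n)}
    (ho : parkAux f (k+1) = some occ') :
    ∃ occ : Fin n → Option (Fin n), parkAux f k = some occ ∧
      ∃ hS : (Finset.univ.filter fun s => f ⟨k, hk⟩ ≤ s ∧ occ s = none).Nonempty,
        occ' = Function.update occ
          ((Finset.univ.filter fun s => f ⟨k, hk⟩ ≤ s ∧ occ s = none).min' hS)
          (some ⟨k, hk⟩) := by
  rw [parkAux_succ] at ho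
  rcases h : parkAux f k with _ | occ
  · rw [h] at ho; simp at ho
  · rw [h] at ho
    simp only [Option.bind_some, Option.bind_some, dif_pos hk] at ho
    by_cases hS : (Finset.univ.filter fun s => f ⟨k, hk⟩ ≤ s ∧ occ s = none).Nonempty
    · rw [dif_pos hS] at ho
      exact ⟨occ, rfl, hS, (Option.some_injective _ ho).symm⟩
    · rw [dif_neg hS] at ho; exact absurd ho (by simp)

/-- cars parked by time `k` have index `< k` -/
lemma parkAux_car_lt : ∀ (k : ℕ) (occ : Fin n → Option (Fin n)),
    parkAux f k = some occ → ∀ s c, occ s = some c → c.val < k := by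
  intro k
  induction k with
  | zero => intro occ h s c hc; simp [parkAux] at h; subst h; simp at hc
  | succ k ih =>
    intro occ' h s c hc
    by_cases hk : k < n
    · obtain ⟨occ, ho, hS, rfl⟩ := parkAux_step_inv hk h
      rcases eq_or_ne s ((Finset.univ.filter fun s => f ⟨k, hk⟩ ≤ s ∧ occ s = none).min' hS) with rfl | hne
      · rw [Function.update_self] at hc
        cases hc; simp
      · rw [Function.update_of_ne hne] at hc
        exact Nat.lt_succ_of_lt (ih occ ho s c hc)
    · rw [parkAux_succ] at h
      rcases h' : parkAux f k with _ | occ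
      · rw [h'] at h; simp at h
      · rw [h'] at h
        simp only [Option.bind_some, Option.bind_some, dif_neg hk] at h
        obtain rfl := Option.some_injective _ h
        exact Nat.lt_succ_of_lt (ih occ h' s c hc)

lemma parkAux_isSome_of_le {m k : ℕ} (hkm : k ≤ m) {occ : Fin n → Option (Fin n)}
    (h : parkAux f m = some occ) : ∃ occk, parkAux f k = some occk := by
  induction m generalizing occ with
  | zero => exact ⟨occ, (Nat.le_zero.mp hkm) ▸ h⟩
  | succ m ih =>
    rcases Nat.lt_or_ge k (m+1) with hlt | hge
    · rw [parkAux_succ] at h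
      rcases h' : parkAux f m with _ | occm
      · rw [h'] at h; simp at h
      · exact ih (Nat.lt_succ_iff.mp hlt) h'
    · exact ⟨occ, (Nat.le_antisymm hkm hge) ▸ h⟩

/-- persistence upward -/
lemma parkAux_persist {k m : ℕ} (hkm : k ≤ m) {occk occm : Fin n → Option (Fin n)}
    (hk : parkAux f k = some occk) (hm : parkAux f m = some occm)
    {s : Fin n} {c : Fin n} (hc : occk s = some c) : occm s = some c := by
  induction m generalizing occm with
  | zero =>
    obtain rfl : k = 0 := Nat.le_zero.mp hkm
    rw [hk] at hm; cases hm; exact hc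
  | succ m ih =>
    rcases Nat.lt_or_ge k (m+1) with hlt | hge
    · have hkm' : k ≤ m := Nat.lt_succ_iff.mp hlt
      rcases h' : parkAux f m with _ | occm'
      · rw [parkAux_succ, h'] at hm; simp at hm
      · have hmid : occm' s = some c := ih hkm' h'
        rw [parkAux_succ, h'] at hm
        simp only [Option.bind_some] at hm
        by_cases hn' : m < n
        · rw [dif_pos hn'] at hm
          by_cases hS : (Finset.univ.filter fun s => f ⟨m, hn'⟩ ≤ s ∧ occm' s = none).Nonempty
          · rw [dif_pos hS] at hm
            cases hm
            have hmem := Finset.min'_mem _ hS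
            simp only [Finset.mem_filter] at hmem
            rw [Function.update_of_ne]
            · exact hmid
            · intro hEq
              rw [hEq, hmem.2.2] at hmid; exact absurd hmid (by simp)
          · rw [dif_neg hS] at hm; exact absurd hm (by simp)
        · rw [dif_neg hn'] at hm; cases hm; exact hmid
    · obtain rfl : k = m + 1 := Nat.le_antisymm hkm hge
      rw [hk] at hm; cases hm; exact hc

/-- persistence downward: early cars were already parked -/
lemma parkAux_back {k m : ℕ} (hkm : k ≤ m) {occk occm : Fin n → Option (Fin n)}
    (hk : parkAux f k = some occk) (hm : parkAux f m = some occm)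
    {s : Fin n} {c : Fin n} (hcm : occm s = some c) (hck : c.val < k) : occk s = some c := by
  induction m generalizing occm with
  | zero =>
    obtain rfl : k = 0 := Nat.le_zero.mp hkm
    omega
  | succ m ih =>
    rcases Nat.lt_or_ge k (m+1) with hlt | hge
    · have hkm' : k ≤ m := Nat.lt_succ_iff.mp hlt
      rcases h' : parkAux f m with _ | occm'
      · rw [parkAux_succ, h'] at hm; simp at hm
      · rw [parkAux_succ, h'] at hm
        simp only [Option.bind_some] at hm
        by_cases hn' : m < n
        · rw [dif_pos hn'] at hm
          by_cases hS : (Finset.univ.filter fun s => f ⟨m, hn'⟩ ≤ s ∧ occm' s = none).Nonempty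
          · rw [dif_pos hS] at hm
            obtain rfl := Option.some_injective _ hm
            apply ih hkm' h'
            rcases eq_or_ne s ((Finset.univ.filter fun s => f ⟨m, hn'⟩ ≤ s ∧ occm' s = none).min' hS) with rfl | hne
            · rw [Function.update_self] at hcm
              obtain rfl := Option.some_injective _ hcm
              simp only [Fin.val_mk] at hck
              omega
            · rwa [Function.update_of_ne hne] at hcm
          · rw [dif_neg hS] at hm; exact absurd hm (by simp)
        · rw [dif_neg hn'] at hm
          obtain rfl := Option.some_injective _ hm
          exact ih hkm' h' hcm
    · obtain rfl : k = m + 1 := Nat.le_antisymm hkm hge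
      rw [hk] at hm
      obtain rfl := Option.some_injective _ hm
      exact hcm

/-- with known final configuration `ρ`, intermediate occupancies are determined -/
lemma parkAux_mid {ρ : Equiv.Perm (Fin n)} (hp : parkAux f n = some fun i => some (ρ i))
    {k : ℕ} (hkn : k ≤ n) {occk : Fin n → Option (Fin n)} (hk : parkAux f k = some occk)
    (s : Fin n) : occk s = if (ρ s).val < k then some (ρ s) else none := by
  split_ifs with h
  · exact parkAux_back hkn hk hp (by simp) h
  · rcases h' : occk s with _ | c
    · rfl
    · exfalso
      have hlt := parkAux_car_lt k occk hk s c h'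
      have h2 : ρ s = c := by
        have := parkAux_persist hkn hk hp h'
        simpa using this
      rw [h2] at h
      omega

/-- the key constraints extracted from a successful run with outcome `ρ` -/
lemma park_constraints {ρ : Equiv.Perm (Fin n)} (hp : parkAux f n = some fun i => some (ρ i))
    {k : ℕ} (hk : k < n) :
    f ⟨k, hk⟩ ≤ ρ.symm ⟨k, hk⟩ ∧
      ∀ s : Fin n, f ⟨k, hk⟩ ≤ s → k ≤ (ρ s).val → ρ.symm ⟨k, hk⟩ ≤ s := by
  obtain ⟨occ1, h1⟩ := parkAux_isSome_of_le (Nat.succ_le_of_lt hk) hp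
  obtain ⟨occ, h0, hS, rfl⟩ := parkAux_step_inv hk h1
  set p := (Finset.univ.filter fun s => f ⟨k, hk⟩ ≤ s ∧ occ s = none).min' hS with hpdef
  have hpmem := Finset.min'_mem _ hS
  rw [← hpdef] at hpmem
  simp only [Finset.mem_filter] at hpmem
  have hρp : ρ p = ⟨k, hk⟩ := by
    have := parkAux_persist (Nat.succ_le_of_lt hk) h1 hp (s := p) (c := ⟨k, hk⟩)
      (by rw [Function.update_self])
    simpa using this
  have hpeq : ρ.symm ⟨k, hk⟩ = p := by rw [← hρp]; simp
  constructor
  · rw [hpeq]; exact hpmem.2.1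
  · intro s hfs hks
    rw [hpeq]
    apply Finset.min'_le
    simp only [Finset.mem_filter]
    refine ⟨Finset.mem_univ _, hfs, ?_⟩
    rw [parkAux_mid hp (Nat.le_of_lt hk) h0 s, if_neg (by omega)]


/-- the permutation `1,2,...,j, j+2, ..., n, j+1` (0-indexed: value `j` moved to the end) -/
def rhoE (j : Fin n) : Equiv.Perm (Fin n) where
  toFun s := if h : s.val = n - 1 then j
    else if s.val < j.val then s else ⟨s.val + 1, by omega⟩
  invFun c := if c.val = j.val then ⟨n - 1, by have := j.isLt; omega⟩
    else if c.val < j.val then c else ⟨c.val - 1, by have := c.isLt; omega⟩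
  left_inv s := by
    dsimp only
    have hs := s.isLt
    have hj := j.isLt
    by_cases h : s.val = n - 1
    · rw [dif_pos h]
      rw [if_pos rfl]
      apply Fin.ext
      simp only [Fin.val_mk]
      omega
    · rw [dif_neg h]
      by_cases h2 : s.val < j.val
      · rw [if_pos h2, if_neg (by omega), if_pos h2]
      · rw [if_neg h2]
        simp only [Fin.val_mk]
        rw [if_neg (by omega), if_neg (by omega)]
        exact Fin.ext (by simp)
  right_inv c := by
    dsimp only
    have hc := c.isLt
    have hj := j.isLt
    by_cases h : c.val = j.val
    · rw [if_pos h]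
      rw [dif_pos (by simp)]
      apply Fin.ext
      omega
    · rw [if_neg h]
      by_cases h2 : c.val < j.val
      · rw [if_pos h2, dif_neg (by omega), if_pos h2]
      · rw [if_neg h2]
        simp only [Fin.val_mk]
        rw [dif_neg (by omega), if_neg (by omega)]
        exact Fin.ext (by simp; omega)

lemma rhoE_apply_last (j : Fin n) {s : Fin n} (h : s.val = n - 1) : rhoE j s = j := by
  simp [rhoE, Equiv.coe_fn_mk, h]

lemma rhoE_apply_lt (j : Fin n) {s : Fin n} (h1 : s.val < j.val) : rhoE j s = s := by
  have hj := j.isLt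
  simp only [rhoE, Equiv.coe_fn_mk]
  rw [dif_neg (by omega), if_pos h1]

lemma rhoE_apply_mid (j : Fin n) {s : Fin n} (h1 : j.val ≤ s.val) (h2 : s.val ≠ n - 1) :
    (rhoE j s).val = s.val + 1 := by
  simp only [rhoE, Equiv.coe_fn_mk]
  rw [dif_neg h2, if_neg (by omega)]

lemma rhoE_symm_self (j : Fin n) : ((rhoE j).symm j).val = n - 1 := by
  simp [rhoE, Equiv.coe_fn_symm_mk]

lemma rhoE_symm_lt (j : Fin n) {c : Fin n} (h : c.val < j.val) : (rhoE j).symm c = c := by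
  simp only [rhoE, Equiv.coe_fn_symm_mk]
  rw [if_neg (by omega), if_pos h]

lemma rhoE_symm_gt (j : Fin n) {c : Fin n} (h : j.val < c.val) :
    ((rhoE j).symm c).val = c.val - 1 := by
  simp only [rhoE, Equiv.coe_fn_symm_mk]
  rw [if_neg (by omega), if_neg (by omega)]

/-- `rhoE j` is increasing away from the last position -/
lemma rhoE_mono (j : Fin n) {a b : Fin n} (hab : a < b) (hb : b.val ≠ n - 1) :
    rhoE j a < rhoE j b := by
  have ha := a.isLt
  have hb' := b.isLt
  have hbn : b.val < n - 1 := by omega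
  have han : a.val ≠ n - 1 := by omega
  rw [Fin.lt_def]
  rcases Nat.lt_or_ge a.val j.val with h1 | h1
  · rw [rhoE_apply_lt j h1]
    rcases Nat.lt_or_ge b.val j.val with h2 | h2
    · rw [rhoE_apply_lt j h2]; exact hab
    · rw [Fin.lt_def] at hab; rw [rhoE_apply_mid j h2 hb]; omega
  · have h2 : j.val ≤ b.val := by rw [Fin.lt_def] at hab; omega
    rw [rhoE_apply_mid j h1 han, rhoE_apply_mid j h2 hb]
    rw [Fin.lt_def] at hab; omega

lemma avoidsAll_of_mono {ρ : Equiv.Perm (Fin n)}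
    (h : ∀ a b : Fin n, a < b → b.val ≠ n - 1 → ρ a < ρ b) :
    AvoidsAll ρ [p213, p312, p321] := by
  intro σ hσ ⟨g, hg, hiff⟩
  have h01 : σ 1 < σ 0 := by
    simp only [List.mem_cons, List.mem_singleton, List.not_mem_nil, or_false] at hσ
    rcases hσ with rfl | rfl | rfl <;> decide
  have hinv : ρ (g 1) < ρ (g 0) := (hiff 1 0).mp h01
  have h01' : g 0 < g 1 := hg (by decide)
  have h12 : g 1 < g 2 := hg (by decide)
  have hne : (g 1).val ≠ n - 1 := by
    have := (g 2).isLt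
    rw [Fin.lt_def] at h12
    omega
  exact absurd (h _ _ h01' hne) (by omega)

lemma avoidsAll_one : AvoidsAll (1 : Equiv.Perm (Fin n)) [p213, p312, p321] :=
  avoidsAll_of_mono (fun a b hab _ => by simpa using hab)

lemma avoidsAll_rhoE (j : Fin n) : AvoidsAll (rhoE j) [p213, p312, p321] :=
  avoidsAll_of_mono (fun _ _ hab hb => rhoE_mono j hab hb)


lemma contains_helper (ρ : Equiv.Perm (Fin n)) (σ : Equiv.Perm (Fin 3)) (a b c : Fin n)
    (hab : a.val < b.val) (hbc : b.val < c.val)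
    (h : ∀ x y : Fin 3, σ x < σ y ↔ (ρ (![a, b, c] x)).val < (ρ (![a, b, c] y)).val) :
    ContainsPattern ρ σ := by
  refine ⟨![a, b, c], ?_, fun x y => (h x y).trans Fin.lt_def.symm⟩
  intro x y hxy
  rw [Fin.lt_def]
  fin_cases x <;> fin_cases y <;>
    first
      | exact hab
      | exact hbc
      | exact Nat.lt_trans hab hbc
      | exact absurd hxy (by decide)

lemma contains213 (ρ : Equiv.Perm (Fin n)) (a b c : Fin n)
    (hab : a.val < b.val) (hbc : b.val < c.val)
    (h1 : (ρ b).val < (ρ a).val) (h2 : (ρ a).val < (ρ c).val) :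
    ContainsPattern ρ p213 := by
  apply contains_helper ρ p213 a b c hab hbc
  intro x y
  fin_cases x <;> fin_cases y <;>
    first
      | exact iff_of_false (by decide) (lt_irrefl _)
      | exact iff_of_true (by decide) h1
      | exact iff_of_true (by decide) h2
      | exact iff_of_true (by decide) (Nat.lt_trans h1 h2)
      | exact iff_of_true (by decide) (Nat.lt_trans h2 h1)
      | exact iff_of_false (by decide) (Nat.lt_asymm h1)
      | exact iff_of_false (by decide) (Nat.lt_asymm h2)
      | exact iff_of_false (by decide) (Nat.lt_asymm (Nat.lt_trans h1 h2))
      | exact iff_of_false (by decide) (Nat.lt_asymm (Nat.lt_trans h2 h1))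

lemma contains312 (ρ : Equiv.Perm (Fin n)) (a b c : Fin n)
    (hab : a.val < b.val) (hbc : b.val < c.val)
    (h1 : (ρ b).val < (ρ c).val) (h2 : (ρ c).val < (ρ a).val) :
    ContainsPattern ρ p312 := by
  apply contains_helper ρ p312 a b c hab hbc
  intro x y
  fin_cases x <;> fin_cases y <;>
    first
      | exact iff_of_false (by decide) (lt_irrefl _)
      | exact iff_of_true (by decide) h1
      | exact iff_of_true (by decide) h2
      | exact iff_of_true (by decide) (Nat.lt_trans h1 h2)
      | exact iff_of_true (by decide) (Nat.lt_trans h2 h1)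
      | exact iff_of_false (by decide) (Nat.lt_asymm h1)
      | exact iff_of_false (by decide) (Nat.lt_asymm h2)
      | exact iff_of_false (by decide) (Nat.lt_asymm (Nat.lt_trans h1 h2))
      | exact iff_of_false (by decide) (Nat.lt_asymm (Nat.lt_trans h2 h1))

lemma contains321 (ρ : Equiv.Perm (Fin n)) (a b c : Fin n)
    (hab : a.val < b.val) (hbc : b.val < c.val)
    (h1 : (ρ b).val < (ρ a).val) (h2 : (ρ c).val < (ρ b).val) :
    ContainsPattern ρ p321 := by
  apply contains_helper ρ p321 a b c hab hbc
  intro x y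
  fin_cases x <;> fin_cases y <;>
    first
      | exact iff_of_false (by decide) (lt_irrefl _)
      | exact iff_of_true (by decide) h1
      | exact iff_of_true (by decide) h2
      | exact iff_of_true (by decide) (Nat.lt_trans h1 h2)
      | exact iff_of_true (by decide) (Nat.lt_trans h2 h1)
      | exact iff_of_false (by decide) (Nat.lt_asymm h1)
      | exact iff_of_false (by decide) (Nat.lt_asymm h2)
      | exact iff_of_false (by decide) (Nat.lt_asymm (Nat.lt_trans h1 h2))
      | exact iff_of_false (by decide) (Nat.lt_asymm (Nat.lt_trans h2 h1))

lemma classify {ρ : Equiv.Perm (Fin n)} (hav : AvoidsAll ρ [p213, p312, p321]) :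
    ρ = 1 ∨ ∃ j : Fin n, j.val + 1 < n ∧ ρ = rhoE j := by
  by_cases hρ : ρ = 1
  · exact Or.inl hρ
  right
  have hex : ∃ i : Fin n, ρ i ≠ i := by
    by_contra hall
    push_neg at hall
    exact hρ (Equiv.ext hall)
  obtain ⟨i0, hi0⟩ := hex
  have hP : ∃ k : ℕ, ∃ hk : k < n, ρ ⟨k, hk⟩ ≠ ⟨k, hk⟩ := ⟨i0.val, i0.isLt, by simpa using hi0⟩
  classical
  obtain ⟨j, hj, hfix⟩ : ∃ j : Fin n, ρ j ≠ j ∧ ∀ i : Fin n, i.val < j.val → ρ i = i := by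
    obtain ⟨hj0n, hj⟩ : ∃ hk : Nat.find hP < n, ρ ⟨Nat.find hP, hk⟩ ≠ ⟨Nat.find hP, hk⟩ :=
      Nat.find_spec hP
    refine ⟨⟨Nat.find hP, hj0n⟩, hj, ?_⟩
    intro i hi
    by_contra hne
    exact Nat.find_min hP hi ⟨i.isLt, by simpa using hne⟩
  have F1 : ∀ i : Fin n, (ρ i).val < j.val → ρ i = i := by
    intro i hi
    have := hfix (ρ i) hi
    have h2 := ρ.injective this
    rw [← h2]
    exact this
  have F2 : j.val < (ρ j).val := by
    rcases Nat.lt_trichotomy (ρ j).val j.val with h | h | h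
    · exact absurd (F1 j h) hj
    · exact absurd (Fin.ext h) hj
    · exact h
  set p := ρ.symm j with hpdef
  have hρp : ρ p = j := ρ.apply_symm_apply j
  have F3 : j.val < p.val := by
    rcases Nat.lt_trichotomy p.val j.val with h | h | h
    · have := hfix p h
      rw [this] at hρp
      omega
    · have : p = j := Fin.ext h
      rw [this] at hρp
      exact absurd hρp hj
    · exact h
  have hvgt : ∀ b : Fin n, j.val ≤ b.val → b.val < p.val → j.val < (ρ b).val := by
    intro b hb1 hb2
    rcases Nat.lt_trichotomy (ρ b).val j.val with h | h | h
    · have := F1 b h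
      rw [this] at h
      omega
    · have : ρ b = ρ p := by rw [hρp]; exact Fin.ext h
      have := ρ.injective this
      omega
    · exact h
  have F4 : p.val = n - 1 := by
    by_contra hp1
    have hpn : p.val < n - 1 := by have := p.isLt; omega
    set q : Fin n := ⟨p.val + 1, by omega⟩ with hqdef
    have hqv : q.val = p.val + 1 := rfl
    have hqj : ρ q ≠ j := by
      intro hEq
      have : q = p := by rw [hpdef, ← hEq]; simp
      apply_fun Fin.val at this
      omega
    have hq1 : j.val < (ρ q).val := by
      rcases Nat.lt_trichotomy (ρ q).val j.val with h | h | h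
      · have := F1 q h
        rw [this] at h
        omega
      · exact absurd (Fin.ext h) hqj
      · exact h
    rcases Nat.lt_trichotomy (ρ j).val (ρ q).val with h | h | h
    · exact hav p213 (by simp) (contains213 ρ j p q F3 (by omega) (by omega) h)
    · have : j = q := ρ.injective (Fin.ext h)
      apply_fun Fin.val at this
      omega
    · exact hav p312 (by simp) (contains312 ρ j p q F3 (by omega) (by omega) h)
  have F5 : ∀ a b : Fin n, j.val ≤ a.val → a.val < b.val → b.val ≤ n - 2 →
      (ρ a).val < (ρ b).val := by
    intro a b ha hab hb
    have hbp : b.val < p.val := by omega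
    have hbj : j.val < (ρ b).val := hvgt b (by omega) hbp
    rcases Nat.lt_trichotomy (ρ a).val (ρ b).val with h | h | h
    · exact h
    · exact absurd (congrArg Fin.val (ρ.injective (Fin.ext h))) (by omega)
    · exact absurd (hav p321 (by simp) (contains321 ρ a b p hab hbp h (by omega))) not_false
  have chainLo : ∀ d : ℕ, ∀ s : Fin n, s.val = j.val + d → s.val ≤ n - 2 →
      s.val + 1 ≤ (ρ s).val := by
    intro d
    induction d with
    | zero =>
      intro s hs _
      have : s = j := Fin.ext (by omega)
      subst this
      omega
    | succ d ih =>
      intro s hs hs2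
      have hlt : j.val + d < n := by omega
      have h1 := ih ⟨j.val + d, hlt⟩ rfl (by simp only [Fin.val_mk]; omega)
      have h2 := F5 ⟨j.val + d, hlt⟩ s (by simp only [Fin.val_mk]; omega)
        (by simp only [Fin.val_mk]; omega) hs2
      simp only [Fin.val_mk] at h1 h2
      omega
  have chainHi : ∀ d : ℕ, ∀ s : Fin n, s.val + d = n - 2 → j.val ≤ s.val →
      (ρ s).val + d ≤ n - 1 := by
    intro d
    induction d with
    | zero =>
      intro s _ _
      have := (ρ s).isLt
      omega
    | succ d ih =>
      intro s hs hjs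
      have hlt : s.val + 1 < n := by omega
      have h1 := ih ⟨s.val + 1, hlt⟩ (by simp only [Fin.val_mk]; omega)
        (by simp only [Fin.val_mk]; omega)
      have h2 := F5 s ⟨s.val + 1, hlt⟩ hjs (by simp only [Fin.val_mk]; omega)
        (by simp only [Fin.val_mk]; omega)
      omega
  have hjlt : j.val + 1 < n := by have := p.isLt; omega
  refine ⟨j, hjlt, ?_⟩
  apply Equiv.ext
  intro s
  rcases Nat.lt_or_ge s.val j.val with h | h
  · rw [hfix s h, rhoE_apply_lt j h]
  · rcases Nat.lt_or_ge s.val (n - 1) with h2 | h2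
    · apply Fin.ext
      rw [rhoE_apply_mid j h (by omega)]
      have l1 := chainLo (s.val - j.val) s (by omega) (by omega)
      have l2 := chainHi (n - 2 - s.val) s (by omega) (by omega)
      omega
    · have hsp : s = p := Fin.ext (by have := s.isLt; omega)
      rw [hsp, hρp, rhoE_apply_last j F4]


lemma parkAux_id (hf : ∀ c, f c ≤ c) :
    ∀ k, k ≤ n → parkAux f k = some (fun s => if s.val < k then some s else none) := by
  intro k
  induction k with
  | zero => intro _; simp [parkAux]
  | succ k ih =>
    intro hk1
    have hk : k < n := hk1
    have step := parkAux_step (f := f) hk (ih (Nat.le_of_lt hk)) ⟨k, hk⟩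
      (hf ⟨k, hk⟩) (by simp) ?_
    · rw [step]
      congr 1
      funext s
      rcases eq_or_ne s (⟨k, hk⟩ : Fin n) with rfl | hne
      · simp
      · rw [Function.update_of_ne hne]
        have : s.val ≠ k := fun h => hne (Fin.ext h)
        by_cases h2 : s.val < k
        · rw [if_pos h2, if_pos (by omega)]
        · rw [if_neg h2, if_neg (by omega)]
    · intro s _ hnone
      simp only [ite_eq_right_iff] at hnone
      rw [Fin.le_def]
      simp only [Fin.val_mk]
      by_contra hc
      exact Option.some_ne_none _ (hnone (by omega))

lemma isParkingPerm_id (hf : ∀ c, f c ≤ c) : IsParkingPerm f 1 := by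
  rw [IsParkingPerm, parkAux_id hf n le_rfl]
  congr 1
  funext s
  rw [if_pos s.isLt]
  rfl

/-- the occupancy trajectory when car `j` goes to the last spot -/
def Oj (j : Fin n) (k : ℕ) : Fin n → Option (Fin n) := fun s =>
  if hs : s.val = n - 1 then (if j.val < k then some j else none)
  else if s.val < j.val then (if s.val < k then some s else none)
  else (if s.val + 1 < k then some ⟨s.val + 1, by have := s.isLt; omega⟩ else none)

lemma parkAux_rho (j : Fin n) (hjn : j.val + 1 < n)
    (hfj : (f j).val = n - 1)
    (hlt : ∀ c : Fin n, c.val < j.val → f c ≤ c)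
    (hgt : ∀ c : Fin n, j.val < c.val → (f c).val < c.val) :
    ∀ k, k ≤ n → parkAux f k = some (Oj j k) := by
  intro k
  induction k with
  | zero =>
    intro _
    simp only [parkAux]
    congr 1
    funext s
    simp [Oj]
  | succ k ih =>
    intro hk1
    have hk : k < n := hk1
    rcases Nat.lt_trichotomy k j.val with hkj | hkj | hkj
    · -- car k parks at spot k
      have step := parkAux_step (f := f) hk (ih (Nat.le_of_lt hk)) ⟨k, hk⟩
        (hlt ⟨k, hk⟩ hkj) ?_ ?_
      · rw [step]
        congr 1
        funext s
        have hjlt := j.isLt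
        rcases eq_or_ne s (⟨k, hk⟩ : Fin n) with rfl | hne
        · rw [Function.update_self]
          simp only [Oj, Fin.val_mk]
          rw [dif_neg (by omega), if_pos hkj, if_pos (by omega)]
        · rw [Function.update_of_ne hne]
          have hsk : s.val ≠ k := fun h => hne (Fin.ext h)
          simp only [Oj]
          by_cases hs : s.val = n - 1
          · rw [dif_pos hs, dif_pos hs, if_neg (by omega), if_neg (by omega)]
          · rw [dif_neg hs, dif_neg hs]
            by_cases h2 : s.val < j.val
            · rw [if_pos h2, if_pos h2]
              by_cases h3 : s.val < k
              · rw [if_pos h3, if_pos (by omega)]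
              · rw [if_neg h3, if_neg (by omega)]
            · rw [if_neg h2, if_neg h2, if_neg (by omega), if_neg (by omega)]
      · simp only [Oj, Fin.val_mk]
        rw [dif_neg (by omega), if_pos hkj, if_neg (by omega)]
      · intro s hfs hnone
        rw [Fin.le_def] at hfs ⊢
        simp only [Fin.val_mk] at hfs ⊢
        simp only [Oj] at hnone
        by_contra hc
        push_neg at hc
        have hsk : s.val < k := by omega
        have hsj : s.val < j.val := by omega
        have hsn : s.val ≠ n - 1 := by omega
        rw [dif_neg hsn, if_pos hsj, if_pos hsk] at hnone
        exact Option.some_ne_none _ hnone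
    · -- car k = j parks at the last spot
      have hkjj : (⟨k, hk⟩ : Fin n) = j := Fin.ext hkj
      have step := parkAux_step (f := f) hk (ih (Nat.le_of_lt hk)) ⟨n - 1, by omega⟩
        ?_ ?_ ?_
      · rw [step]
        congr 1
        funext s
        rcases eq_or_ne s (⟨n - 1, by omega⟩ : Fin n) with rfl | hne
        · rw [Function.update_self]
          simp only [Oj, Fin.val_mk]
          rw [dif_pos trivial, if_pos (by omega), hkjj]
        · rw [Function.update_of_ne hne]
          have hsn : s.val ≠ n - 1 := fun h => hne (Fin.ext h)
          simp only [Oj]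
          rw [dif_neg hsn, dif_neg hsn]
          by_cases h2 : s.val < j.val
          · rw [if_pos h2, if_pos h2]
            by_cases h3 : s.val < k
            · rw [if_pos h3, if_pos (by omega)]
            · rw [if_neg h3, if_neg (by omega)]
          · rw [if_neg h2, if_neg h2, if_neg (by omega), if_neg (by omega)]
      · rw [hkjj, Fin.le_def]
        simp only [Fin.val_mk]
        omega
      · simp only [Oj, Fin.val_mk]
        rw [dif_pos trivial, if_neg (by omega)]
      · intro s hfs _
        rw [hkjj, Fin.le_def] at hfs
        rw [Fin.le_def]
        simp only [Fin.val_mk] at hfs ⊢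
        have := s.isLt
        omega
    · -- car k > j parks at spot k - 1
      have hck : j.val < (⟨k, hk⟩ : Fin n).val := hkj
      have step := parkAux_step (f := f) hk (ih (Nat.le_of_lt hk)) ⟨k - 1, by omega⟩
        ?_ ?_ ?_
      · rw [step]
        congr 1
        funext s
        have hjlt := j.isLt
        rcases eq_or_ne s (⟨k - 1, by omega⟩ : Fin n) with rfl | hne
        · rw [Function.update_self]
          simp only [Oj, Fin.val_mk]
          rw [dif_neg (by omega), if_neg (by omega), if_pos (by omega)]
          congr 1
          exact Fin.ext (by simp; omega)
        · rw [Function.update_of_ne hne]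
          have hsk : s.val ≠ k - 1 := fun h => hne (Fin.ext h)
          simp only [Oj]
          by_cases hs : s.val = n - 1
          · rw [dif_pos hs, dif_pos hs, if_pos (by omega), if_pos (by omega)]
          · rw [dif_neg hs, dif_neg hs]
            by_cases h2 : s.val < j.val
            · rw [if_pos h2, if_pos h2]
              by_cases h3 : s.val < k
              · rw [if_pos h3, if_pos (by omega)]
              · rw [if_neg h3, if_neg (by omega)]
            · rw [if_neg h2, if_neg h2]
              by_cases h3 : s.val + 1 < k
              · rw [if_pos h3, if_pos (by omega)]
              · rw [if_neg h3, if_neg (by omega)]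
      · have := hgt ⟨k, hk⟩ hck
        rw [Fin.le_def]
        simp only [Fin.val_mk] at this ⊢
        omega
      · simp only [Oj, Fin.val_mk]
        rw [dif_neg (by omega), if_neg (by omega), if_neg (by omega)]
      · intro s hfs hnone
        rw [Fin.le_def] at hfs ⊢
        simp only [Fin.val_mk] at hfs ⊢
        simp only [Oj] at hnone
        by_contra hc
        push_neg at hc
        have hsn : s.val ≠ n - 1 := by omega
        rw [dif_neg hsn] at hnone
        by_cases h2 : s.val < j.val
        · rw [if_pos h2, if_pos (by omega)] at hnone
          exact Option.some_ne_none _ hnone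
        · rw [if_neg h2, if_pos (by omega)] at hnone
          exact Option.some_ne_none _ hnone

lemma isParkingPerm_rho (j : Fin n) (hjn : j.val + 1 < n)
    (hfj : (f j).val = n - 1)
    (hlt : ∀ c : Fin n, c.val < j.val → f c ≤ c)
    (hgt : ∀ c : Fin n, j.val < c.val → (f c).val < c.val) :
    IsParkingPerm f (rhoE j) := by
  rw [IsParkingPerm, parkAux_rho j hjn hfj hlt hgt n le_rfl]
  congr 1
  funext s
  have hs := s.isLt
  simp only [Oj]
  by_cases h : s.val = n - 1
  · rw [dif_pos h, if_pos (by omega), rhoE_apply_last j h]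
  · rw [dif_neg h]
    by_cases h2 : s.val < j.val
    · rw [if_pos h2, if_pos (by omega), rhoE_apply_lt j h2]
    · rw [if_neg h2, if_pos (by omega)]
      congr 1
      exact Fin.ext (by rw [rhoE_apply_mid j (by omega) h])


lemma isPF_id (hf : ∀ c, f c ≤ c) : IsParkingFunction f := by
  intro i
  have hsub : Finset.Iic i ⊆ Finset.univ.filter fun c => f c ≤ i := by
    intro c hc
    rw [Finset.mem_Iic] at hc
    simp only [Finset.mem_filter, Finset.mem_univ, true_and]
    exact le_trans (hf c) hc
  calc i.val + 1 = (Finset.Iic i).card := (Fin.card_Iic i).symm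
    _ ≤ _ := Finset.card_le_card hsub

lemma isPF_rho (j : Fin n) (hjn : j.val + 1 < n)
    (hfj : (f j).val = n - 1)
    (hlt : ∀ c : Fin n, c.val < j.val → f c ≤ c)
    (hgt : ∀ c : Fin n, j.val < c.val → (f c).val < c.val) :
    IsParkingFunction f := by
  intro i
  have hi := i.isLt
  rcases Nat.lt_or_ge i.val j.val with h | h
  · -- use {0..i}
    have hsub : Finset.Iic i ⊆ Finset.univ.filter fun c => f c ≤ i := by
      intro c hc
      rw [Finset.mem_Iic, Fin.le_def] at hc
      simp only [Finset.mem_filter, Finset.mem_univ, true_and, Fin.le_def]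
      have := hlt c (by omega)
      rw [Fin.le_def] at this
      omega
    calc i.val + 1 = (Finset.Iic i).card := (Fin.card_Iic i).symm
      _ ≤ _ := Finset.card_le_card hsub
  · rcases Nat.lt_or_ge i.val (n - 1) with h2 | h2
    · -- use {0..i+1} \ {j}
      set i' : Fin n := ⟨i.val + 1, by omega⟩ with hi'
      have hsub : (Finset.Iic i').erase j ⊆ Finset.univ.filter fun c => f c ≤ i := by
        intro c hc
        rw [Finset.mem_erase, Finset.mem_Iic, Fin.le_def] at hc
        obtain ⟨hcj, hci⟩ := hc
        have hcjv : c.val ≠ j.val := fun hh => hcj (Fin.ext hh)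
        simp only [Finset.mem_filter, Finset.mem_univ, true_and, Fin.le_def]
        simp only [hi', Fin.val_mk] at hci
        rcases Nat.lt_or_ge c.val j.val with hcase | hcase
        · have := hlt c hcase
          rw [Fin.le_def] at this
          omega
        · have := hgt c (by omega)
          omega
      have hjmem : j ∈ Finset.Iic i' := by
        rw [Finset.mem_Iic, Fin.le_def]
        simp only [hi', Fin.val_mk]
        omega
      calc i.val + 1 = (Finset.Iic i').card - 1 := by
            rw [Fin.card_Iic]
            simp only [hi', Fin.val_mk]
            omega
          _ = ((Finset.Iic i').erase j).card := (Finset.card_erase_of_mem hjmem).symm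
          _ ≤ _ := Finset.card_le_card hsub
    · -- i = n - 1 : everything qualifies
      have : (Finset.univ.filter fun c => f c ≤ i) = Finset.univ := by
        apply Finset.filter_true_of_mem
        intro c _
        rw [Fin.le_def]
        have := (f c).isLt
        omega
      rw [this, Finset.card_univ, Fintype.card_fin]
      omega

/-- the explicit characterization of the good parking functions -/
def GoodId (f : Fin n → Fin n) : Prop := ∀ c, f c ≤ c

def GoodRho (j : Fin n) (f : Fin n → Fin n) : Prop :=
  j.val + 1 < n ∧ (f j).val = n - 1 ∧ (∀ c : Fin n, c.val < j.val → f c ≤ c) ∧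
    ∀ c : Fin n, j.val < c.val → (f c).val < c.val

theorem good_iff (f : Fin n → Fin n) :
    (IsParkingFunction f ∧ ∃ ρ : Equiv.Perm (Fin n), IsParkingPerm f ρ ∧
      AvoidsAll ρ [p213, p312, p321]) ↔ (GoodId f ∨ ∃ j : Fin n, GoodRho j f) := by
  constructor
  · rintro ⟨-, ρ, hρ, hav⟩
    rcases classify hav with rfl | ⟨j, hjn, rfl⟩
    · left
      intro c
      have hc := c.isLt
      have := (park_constraints hρ (k := c.val) hc).1
      simpa [Equiv.Perm.one_symm] using this
    · right
      refine ⟨j, hjn, ?_, ?_, ?_⟩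
      · -- f j = n - 1
        have hc := j.isLt
        obtain ⟨-, h2⟩ := park_constraints hρ (k := j.val) hc
        simp only [Fin.eta] at h2
        by_contra hne
        have hfjlt : (f j).val < n - 1 := by have := (f j).isLt; omega
        have h3 := h2 ⟨max (f j).val j.val, by omega⟩ ?_ ?_
        · rw [Fin.le_def, rhoE_symm_self j] at h3
          simp only [Fin.val_mk] at h3
          omega
        · rw [Fin.le_def]
          simp only [Fin.val_mk]
          omega
        · rw [rhoE_apply_mid j (by simp only [Fin.val_mk]; omega)
            (by simp only [Fin.val_mk]; omega)]
          simp only [Fin.val_mk]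
          omega
      · intro c hcj
        have hc := c.isLt
        have h1 := (park_constraints hρ (k := c.val) hc).1
        simp only [Fin.eta] at h1
        rwa [rhoE_symm_lt j hcj] at h1
      · intro c hcj
        have hc := c.isLt
        have h1 := (park_constraints hρ (k := c.val) hc).1
        simp only [Fin.eta] at h1
        rw [Fin.le_def, rhoE_symm_gt j hcj] at h1
        omega
  · rintro (hf | ⟨j, hjn, hfj, hlt, hgt⟩)
    · exact ⟨isPF_id hf, 1, isParkingPerm_id hf, avoidsAll_one⟩
    · exact ⟨isPF_rho j hjn hfj hlt hgt, rhoE j,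
        isParkingPerm_rho j hjn hfj hlt hgt, avoidsAll_rhoE j⟩


lemma natprod : ∀ N J : ℕ, J < N →
    (∏ i ∈ Finset.range N, (if i < J then i + 1 else if i = J then 1 else i)) =
      (N - 1).factorial := by
  intro N
  induction N with
  | zero => intro J hJ; omega
  | succ N ih =>
    intro J hJ
    rw [Finset.prod_range_succ]
    rcases Nat.lt_or_ge J N with h | h
    · rw [ih J h, if_neg (by omega), if_neg (by omega)]
      simp only [Nat.add_sub_cancel]
      rw [Nat.mul_comm, Nat.mul_factorial_pred (by omega)]
    · have hJN : J = N := by omega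
      subst hJN
      rw [if_neg (by omega), if_pos rfl, mul_one, Nat.add_sub_cancel]
      rw [← Finset.prod_range_add_one_eq_factorial]
      apply Finset.prod_congr rfl
      intro i hi
      rw [Finset.mem_range] at hi
      rw [if_pos hi]

variable (n) in
/-- the coordinate sets for the `j`-th fiber -/
def tset (hn : 0 < n) (j : Fin n) (c : Fin n) : Finset (Fin n) :=
  if c.val < j.val then Finset.Iic c
  else if c.val = j.val then {(⟨n - 1, by omega⟩ : Fin n)}
  else Finset.Iio c

lemma mem_tset_iff (hn : 0 < n) (j : Fin n) (f : Fin n → Fin n) :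
    f ∈ Fintype.piFinset (tset n hn j) ↔
      ((f j).val = n - 1 ∧ (∀ c : Fin n, c.val < j.val → f c ≤ c) ∧
        ∀ c : Fin n, j.val < c.val → (f c).val < c.val) := by
  rw [Fintype.mem_piFinset]
  constructor
  · intro h
    refine ⟨?_, ?_, ?_⟩
    · have := h j
      rw [tset, if_neg (by omega), if_pos rfl, Finset.mem_singleton] at this
      rw [this]
    · intro c hc
      have := h c
      rwa [tset, if_pos hc, Finset.mem_Iic] at this
    · intro c hc
      have := h c
      rw [tset, if_neg (by omega), if_neg (by omega), Finset.mem_Iio, Fin.lt_def] at this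
      exact this
  · rintro ⟨h1, h2, h3⟩ c
    rw [tset]
    by_cases hc : c.val < j.val
    · rw [if_pos hc, Finset.mem_Iic]
      exact h2 c hc
    · by_cases hc2 : c.val = j.val
      · have : c = j := Fin.ext hc2
        subst this
        rw [if_neg hc, if_pos rfl, Finset.mem_singleton]
        exact Fin.ext (by simpa using h1)
      · rw [if_neg hc, if_neg hc2, Finset.mem_Iio, Fin.lt_def]
        exact h3 c (by omega)

lemma card_tset (hn : 0 < n) (j : Fin n) (hj : j.val + 1 < n) :
    ∏ c : Fin n, (tset n hn j c).card = (n - 1).factorial := by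
  have : ∀ c : Fin n, (tset n hn j c).card =
      (fun i => if i < j.val then i + 1 else if i = j.val then 1 else i) c.val := by
    intro c
    rw [tset]
    by_cases hc : c.val < j.val
    · rw [if_pos hc, Fin.card_Iic]
      simp [hc]
    · by_cases hc2 : c.val = j.val
      · rw [if_neg hc, if_pos hc2, Finset.card_singleton]
        simp [hc, hc2]
      · rw [if_neg hc, if_neg hc2, Fin.card_Iio]
        simp [hc, hc2]
  rw [Finset.prod_congr rfl (fun c _ => this c)]
  rw [Fin.prod_univ_eq_prod_range (fun i => if i < j.val then i + 1 else if i = j.val then 1 else i) n]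
  exact natprod n j.val (by omega)


lemma goodId_iff (f : Fin n → Fin n) : GoodId f ↔ ∀ c, f c ≤ c := Iff.rfl

lemma goodRho_iff (j : Fin n) (f : Fin n → Fin n) :
    GoodRho j f ↔ (j.val + 1 < n ∧ (f j).val = n - 1 ∧
      (∀ c : Fin n, c.val < j.val → f c ≤ c) ∧
      ∀ c : Fin n, j.val < c.val → (f c).val < c.val) := Iff.rfl

end PF

theorem stmt13 (n : ℕ) (hn : 1 ≤ n) :
    pk n [p213, p312, p321] = (2 * n - 1) * (n - 1).factorial := by
  classical
  have hn0 : 0 < n := hn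
  rw [pk, Nat.card_congr (Equiv.subtypeEquivRight (fun f => PF.good_iff f))]
  rw [Nat.card_eq_fintype_card, Fintype.card_subtype]
  have hA : ∀ f : Fin n → Fin n,
      PF.GoodId f ↔ f ∈ Fintype.piFinset (fun c : Fin n => Finset.Iic c) := by
    intro f
    rw [Fintype.mem_piFinset, PF.goodId_iff]
    exact ⟨fun h c => Finset.mem_Iic.mpr (h c), fun h c => Finset.mem_Iic.mp (h c)⟩
  set J : Finset (Fin n) := Finset.univ.filter (fun j : Fin n => j.val + 1 < n) with hJ
  have hJmem : ∀ j : Fin n, j ∈ J ↔ j.val + 1 < n := by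
    intro j; rw [hJ, Finset.mem_filter]; simp
  have hset : (Finset.univ.filter fun f : Fin n → Fin n =>
        PF.GoodId f ∨ ∃ j, PF.GoodRho j f) =
      Fintype.piFinset (fun c : Fin n => Finset.Iic c) ∪
        J.biUnion (fun j => Fintype.piFinset (PF.tset n hn0 j)) := by
    ext f
    simp only [Finset.mem_filter, Finset.mem_univ, true_and, Finset.mem_union,
      Finset.mem_biUnion]
    constructor
    · rintro (h | ⟨j, hj⟩)
      · left; exact (hA f).mp h
      · obtain ⟨hj1, hj2, hj3, hj4⟩ := (PF.goodRho_iff j f).mp hj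
        right
        exact ⟨j, (hJmem j).mpr hj1, (PF.mem_tset_iff hn0 j f).mpr ⟨hj2, hj3, hj4⟩⟩
    · rintro (h | ⟨j, hjJ, hmem⟩)
      · left; exact (hA f).mpr h
      · right
        obtain ⟨h1, h2, h3⟩ := (PF.mem_tset_iff hn0 j f).mp hmem
        exact ⟨j, (PF.goodRho_iff j f).mpr ⟨(hJmem j).mp hjJ, h1, h2, h3⟩⟩
  have hdis : Disjoint (Fintype.piFinset (fun c : Fin n => Finset.Iic c))
      (J.biUnion (fun j => Fintype.piFinset (PF.tset n hn0 j))) := by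
    rw [Finset.disjoint_left]
    intro f hfA hfB
    obtain ⟨j, hjJ, hmem⟩ := Finset.mem_biUnion.mp hfB
    have h1 := ((PF.mem_tset_iff hn0 j f).mp hmem).1
    have h2 := Fintype.mem_piFinset.mp hfA j
    rw [Finset.mem_Iic, Fin.le_def] at h2
    have h3 := (hJmem j).mp hjJ
    omega
  have hpair : ∀ j ∈ J, ∀ j' ∈ J, j ≠ j' →
      Disjoint (Fintype.piFinset (PF.tset n hn0 j)) (Fintype.piFinset (PF.tset n hn0 j')) := by
    intro j hj j' hj' hne
    rw [Finset.disjoint_left]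
    intro f hf1 hf2
    obtain ⟨a1, a2, a3⟩ := (PF.mem_tset_iff hn0 j f).mp hf1
    obtain ⟨b1, b2, b3⟩ := (PF.mem_tset_iff hn0 j' f).mp hf2
    have hjv : j.val ≠ j'.val := fun h => hne (Fin.ext h)
    have hj1 := (hJmem j).mp hj
    have hj'1 := (hJmem j').mp hj'
    rcases Nat.lt_or_ge j.val j'.val with h | h
    · have := b2 j h
      rw [Fin.le_def] at this
      omega
    · have := b3 j (by omega)
      omega
  rw [hset, Finset.card_union_of_disjoint hdis, Finset.card_biUnion hpair]
  have hcardA : (Fintype.piFinset (fun c : Fin n => Finset.Iic c)).card = n.factorial := by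
    rw [Fintype.card_piFinset]
    simp only [Fin.card_Iic]
    rw [Fin.prod_univ_eq_prod_range (fun i => i + 1) n,
      Finset.prod_range_add_one_eq_factorial]
  have hcardB : ∀ j ∈ J, (Fintype.piFinset (PF.tset n hn0 j)).card = (n - 1).factorial := by
    intro j hj
    rw [Fintype.card_piFinset]
    exact PF.card_tset hn0 j ((hJmem j).mp hj)
  rw [hcardA, Finset.sum_congr rfl hcardB, Finset.sum_const, smul_eq_mul]
  have hJcard : J.card = n - 1 := by
    have : J = Finset.Iio (⟨n - 1, by omega⟩ : Fin n) := by
      ext x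
      rw [hJmem, Finset.mem_Iio, Fin.lt_def]
      simp only [Fin.val_mk]
      omega
    rw [this, Fin.card_Iio]
  rw [hJcard]
  rw [← Nat.mul_factorial_pred hn0.ne', ← Nat.add_mul]
  congr 1
  omega
end
end

section
/- The number of parking functions of size n whose parking permutation avoids 231, 312, and 321 equals ∑_{k=0}^n (−1)^k · (n!/k!) · (n−k+1). -/
open Finset

noncomputable section

section Park

variable {n : ℕ} (f : Fin n → Fin n)

lemma parkAux_isSome_mono {m k : ℕ} (hmk : m ≤ k) (h : (parkAux f k).isSome) :
    (parkAux f m).isSome := by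
  induction k with
  | zero => simpa [Nat.le_zero.mp hmk] using h
  | succ k ih =>
    rcases Nat.lt_or_ge m (k+1) with hm | hm
    · apply ih (Nat.lt_succ_iff.mp hm)
      rw [parkAux] at h
      cases hk : parkAux f k with
      | none => rw [hk] at h; simp at h
      | some o => simp [hk]
    · have : m = k + 1 := le_antisymm hmk hm
      rwa [this]

lemma parkAux_step_mono {k : ℕ} {o o' : Fin n → Option (Fin n)}
    (h1 : parkAux f k = some o) (h2 : parkAux f (k+1) = some o')
    {s : Fin n} {c : Fin n} (hs : o s = some c) : o' s = some c := by
  rw [parkAux, h1] at h2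
  simp only [Option.bind_some] at h2
  by_cases hk : k < n
  · rw [dif_pos hk] at h2
    by_cases hS : (Finset.univ.filter fun s => f ⟨k, hk⟩ ≤ s ∧ o s = none).Nonempty
    · rw [dif_pos hS] at h2
      have hmem := Finset.min'_mem _ hS
      simp only [Finset.mem_filter] at hmem
      have hne : s ≠ (Finset.univ.filter fun s => f ⟨k, hk⟩ ≤ s ∧ o s = none).min' hS := by
        intro he; rw [← he] at hmem; rw [hmem.2.2] at hs; exact nomatch hs
      rw [← Option.some_inj.mp h2]
      simp [Function.update, hne]
      exact hs
    · rw [dif_neg hS] at h2; exact nomatch h2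
  · rw [dif_neg hk] at h2
    rw [← Option.some_inj.mp h2]; exact hs

lemma parkAux_le_mono {a b : ℕ} (hab : a ≤ b) {o o' : Fin n → Option (Fin n)}
    (h1 : parkAux f a = some o) (h2 : parkAux f b = some o')
    {s : Fin n} {c : Fin n} (hs : o s = some c) : o' s = some c := by
  induction b generalizing o' with
  | zero =>
    have : a = 0 := Nat.le_zero.mp hab
    subst this; rw [h1] at h2; rw [← Option.some_inj.mp h2]; exact hs
  | succ b ih =>
    rcases Nat.lt_or_ge a (b+1) with hm | hm
    · have hsome : (parkAux f b).isSome := by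
        apply parkAux_isSome_mono f (le_refl b)
        rw [parkAux] at h2
        cases hk : parkAux f b with
        | none => rw [hk] at h2; simp at h2
        | some om => simp [hk]
      cases hk : parkAux f b with
      | none => rw [hk] at hsome; simp at hsome
      | some om =>
        exact parkAux_step_mono f hk h2 (ih (Nat.lt_succ_iff.mp hm) hk)
    · have : a = b + 1 := le_antisymm hab hm
      subst this; rw [h1] at h2; rw [← Option.some_inj.mp h2]; exact hs

end Park
section KeyA

variable {n : ℕ}

lemma keyA (f : Fin n → Fin n) (ρ : Fin n → Fin n) (hinv : Function.Involutive ρ)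
    (H1 : ∀ k : Fin n, (f k : ℕ) ≤ ρ k)
    (H2 : ∀ k s : Fin n, (f k : ℕ) ≤ s → (k : ℕ) ≤ ρ s → (ρ k : ℕ) ≤ s) :
    ∀ k, k ≤ n →
      parkAux f k = some (fun s => if (ρ s : ℕ) < k then some (ρ s) else none) := by
  intro k
  induction k with
  | zero =>
    intro _
    simp only [parkAux, Nat.not_lt_zero, if_false]
  | succ k ih =>
    intro hk1
    have hk : k < n := hk1
    rw [parkAux, ih (le_of_lt hk), Option.bind_some, dif_pos hk]
    set o : Fin n → Option (Fin n) := fun s => if (ρ s : ℕ) < k then some (ρ s) else none with ho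
    have hmem : ∀ s : Fin n,
        (s ∈ Finset.univ.filter fun s => f ⟨k, hk⟩ ≤ s ∧ o s = none) ↔
        ((f ⟨k, hk⟩ : ℕ) ≤ s ∧ (k : ℕ) ≤ (ρ s : ℕ)) := by
      intro s
      simp only [Finset.mem_filter, Finset.mem_univ, true_and, Fin.le_def, ho]
      constructor
      · rintro ⟨h1, h2⟩
        refine ⟨h1, ?_⟩
        by_contra hc
        rw [if_pos (by omega)] at h2
        exact nomatch h2
      · rintro ⟨h1, h2⟩
        exact ⟨h1, by rw [if_neg (by omega)]⟩
    have hmemρ : ρ ⟨k, hk⟩ ∈ Finset.univ.filter fun s => f ⟨k, hk⟩ ≤ s ∧ o s = none := by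
      rw [hmem]
      refine ⟨H1 _, ?_⟩
      rw [hinv ⟨k, hk⟩]
    have hS : (Finset.univ.filter fun s => f ⟨k, hk⟩ ≤ s ∧ o s = none).Nonempty :=
      ⟨_, hmemρ⟩
    rw [dif_pos hS]
    have hmin : (Finset.univ.filter fun s => f ⟨k, hk⟩ ≤ s ∧ o s = none).min' hS
        = ρ ⟨k, hk⟩ := by
      refine le_antisymm (Finset.min'_le _ _ hmemρ) ?_
      have hm := Finset.min'_mem _ hS
      rw [hmem] at hm
      exact Fin.le_def.mpr (H2 _ _ hm.1 hm.2)
    rw [hmin]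
    congr 1
    funext s
    by_cases hs : s = ρ ⟨k, hk⟩
    · subst hs
      rw [Function.update_self]
      rw [hinv ⟨k, hk⟩]
      rw [if_pos (Nat.lt_succ_self k)]
    · rw [Function.update_of_ne hs]
      have hne : (ρ s : ℕ) ≠ k := by
        intro h
        apply hs
        have : ρ s = ⟨k, hk⟩ := Fin.ext h
        rw [← this, hinv s]
      have : ((ρ s : ℕ) < k + 1) ↔ ((ρ s : ℕ) < k) := by omega
      rw [ho]
      simp only [this]

end KeyA
section KeyB

variable {n : ℕ}

lemma keyB_step (f : Fin n → Fin n) (ρ : Equiv.Perm (Fin n)) (hpark : IsParkingPerm f ρ)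
    {k : ℕ} (hk : k < n)
    (ih : parkAux f k = some (fun s => if (ρ s : ℕ) < k then some (ρ s) else none)) :
    ∃ hS : (Finset.univ.filter fun s =>
        f ⟨k, hk⟩ ≤ s ∧ (if (ρ s : ℕ) < k then some (ρ s) else none) = none).Nonempty,
      (Finset.univ.filter fun s =>
        f ⟨k, hk⟩ ≤ s ∧ (if (ρ s : ℕ) < k then some (ρ s) else none) = none).min' hS
        = ρ.symm ⟨k, hk⟩ ∧
      parkAux f (k+1) = some (fun s => if (ρ s : ℕ) < k + 1 then some (ρ s) else none) := by
  have hsome : (parkAux f (k+1)).isSome :=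
    parkAux_isSome_mono f hk (by rw [hpark]; rfl)
  have heq : parkAux f (k+1) =
      if hS : (Finset.univ.filter fun s =>
          f ⟨k, hk⟩ ≤ s ∧ (if (ρ s : ℕ) < k then some (ρ s) else none) = none).Nonempty then
        some (Function.update (fun s => if (ρ s : ℕ) < k then some (ρ s) else none)
          ((Finset.univ.filter fun s =>
            f ⟨k, hk⟩ ≤ s ∧ (if (ρ s : ℕ) < k then some (ρ s) else none) = none).min' hS)
          (some ⟨k, hk⟩))
      else none := by
    rw [parkAux, ih, Option.bind_some, dif_pos hk]
  by_cases hS : (Finset.univ.filter fun s =>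
      f ⟨k, hk⟩ ≤ s ∧ (if (ρ s : ℕ) < k then some (ρ s) else none) = none).Nonempty
  · refine ⟨hS, ?_⟩
    rw [dif_pos hS] at heq
    set m := (Finset.univ.filter fun s =>
      f ⟨k, hk⟩ ≤ s ∧ (if (ρ s : ℕ) < k then some (ρ s) else none) = none).min' hS with hm
    have hfin : some (ρ m) = some ⟨k, hk⟩ := by
      have := parkAux_le_mono f hk heq hpark
        (s := m) (c := ⟨k, hk⟩) (Function.update_self _ _ _)
      exact this
    have hρm : ρ m = ⟨k, hk⟩ := Option.some_inj.mp hfin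
    have hmval : m = ρ.symm ⟨k, hk⟩ := by
      rw [Equiv.eq_symm_apply]; exact hρm
    refine ⟨hmval, ?_⟩
    rw [heq]
    congr 1
    funext s
    by_cases hs : s = m
    · subst hs
      rw [Function.update_self, hρm, if_pos (Nat.lt_succ_self k)]
    · rw [Function.update_of_ne hs]
      have hne : (ρ s : ℕ) ≠ k := by
        intro h
        exact hs (by rw [hmval, Equiv.eq_symm_apply]; exact Fin.ext h)
      have hiff : ((ρ s : ℕ) < k + 1) ↔ ((ρ s : ℕ) < k) := by omega
      simp only [hiff]
  · rw [dif_neg hS] at heq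
    rw [heq] at hsome
    exact absurd hsome (by simp)

lemma keyB1 (f : Fin n → Fin n) (ρ : Equiv.Perm (Fin n)) (hpark : IsParkingPerm f ρ) :
    ∀ k, k ≤ n →
      parkAux f k = some (fun s => if (ρ s : ℕ) < k then some (ρ s) else none) := by
  intro k
  induction k with
  | zero =>
    intro _
    simp only [parkAux, Nat.not_lt_zero, if_false]
  | succ k ih =>
    intro hk1
    have hk : k < n := hk1
    obtain ⟨hS, _, h3⟩ := keyB_step f ρ hpark hk (ih (le_of_lt hk))
    exact h3

lemma keyB_constraints (f : Fin n → Fin n) (ρ : Equiv.Perm (Fin n))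
    (hpark : IsParkingPerm f ρ) (k : Fin n) :
    (f k : ℕ) ≤ (ρ.symm k : ℕ) ∧
      ∀ s : Fin n, (f k : ℕ) ≤ s → (k : ℕ) ≤ ρ s → ((ρ.symm k : ℕ) ≤ s) := by
  have hk : (k : ℕ) < n := k.isLt
  obtain ⟨hS, hmin, _⟩ := keyB_step f ρ hpark hk (keyB1 f ρ hpark k (le_of_lt hk))
  have hkk : (⟨(k : ℕ), hk⟩ : Fin n) = k := by exact Fin.eta k hk
  have hmem := Finset.min'_mem _ hS
  rw [hmin] at hmem
  simp only [Finset.mem_filter, Finset.mem_univ, true_and, hkk] at hmem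
  constructor
  · exact Fin.le_def.mp hmem.1
  · intro s hfs hks
    have hsmem : s ∈ Finset.univ.filter fun s =>
        f ⟨(k : ℕ), hk⟩ ≤ s ∧ (if (ρ s : ℕ) < (k : ℕ) then some (ρ s) else none) = none := by
      simp only [Finset.mem_filter, Finset.mem_univ, true_and, hkk]
      exact ⟨Fin.le_def.mpr hfs, by rw [if_neg (by omega)]⟩
    have := Finset.min'_le _ _ hsmem
    rw [hmin] at this
    exact Fin.le_def.mp this

end KeyB
lemma lt_swap_iff {α β : Type*} [LinearOrder α] [LinearOrder β] {u v : α} {p q : β}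
    (hne : u ≠ v) (hne2 : p ≠ q) (h : u < v ↔ p < q) : v < u ↔ q < p := by
  constructor
  · intro hv
    rcases lt_trichotomy p q with h1 | h1 | h1
    · exact absurd (h.mpr h1) (lt_asymm hv)
    · exact absurd h1 hne2
    · exact h1
  · intro hq
    rcases lt_trichotomy u v with h1 | h1 | h1
    · exact absurd (h.mp h1) (lt_asymm hq)
    · exact absurd h1 hne
    · exact h1

lemma containsPattern_of_triple {n : ℕ} (π : Equiv.Perm (Fin n)) (σ : Equiv.Perm (Fin 3))
    {a b c : Fin n} (hab : a < b) (hbc : b < c)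
    (h01 : σ 0 < σ 1 ↔ π a < π b) (h02 : σ 0 < σ 2 ↔ π a < π c)
    (h12 : σ 1 < σ 2 ↔ π b < π c) : ContainsPattern π σ := by
  have hac : a < c := lt_trans hab hbc
  have hσ : ∀ x y : Fin 3, x ≠ y → σ x ≠ σ y := fun x y h e => h (σ.injective e)
  have hπ : ∀ x y : Fin n, x ≠ y → π x ≠ π y := fun x y h e => h (π.injective e)
  refine ⟨![a, b, c], ?_, ?_⟩
  · intro x y hxy
    fin_cases x <;> fin_cases y <;>
      simp_all
  · intro x y
    fin_cases x <;> fin_cases y <;> simp only [Matrix.cons_val_zero, Matrix.cons_val_one,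
      Matrix.head_cons, Matrix.cons_val_two, Matrix.tail_cons, Fin.isValue]
    · simp
    · exact h01
    · exact h02
    · exact lt_swap_iff (hσ 0 1 (by decide)) (hπ a b (ne_of_lt hab)) h01
    · simp
    · exact h12
    · exact lt_swap_iff (hσ 0 2 (by decide)) (hπ a c (ne_of_lt hac)) h02
    · exact lt_swap_iff (hσ 1 2 (by decide)) (hπ b c (ne_of_lt hbc)) h12
    · simp
section Class

variable {n : ℕ}

lemma my_card_filter_le (b : Fin n) :
    (Finset.univ.filter fun s => s ≤ b).card = (b : ℕ) + 1 := by
  rw [show (Finset.univ.filter fun s : Fin n => s ≤ b) = Finset.Iic b from by ext s; simp,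
    Fin.card_Iic]

lemma my_card_filter_ge (a : Fin n) :
    (Finset.univ.filter fun s => a ≤ s).card = n - (a : ℕ) := by
  rw [show (Finset.univ.filter fun s : Fin n => a ≤ s) = Finset.Ici a from by ext s; simp,
    Fin.card_Ici]

lemma card_filter_perm (ρ : Equiv.Perm (Fin n)) (p : Fin n → Prop) [DecidablePred p] :
    (Finset.univ.filter fun s => p (ρ s)).card = (Finset.univ.filter p).card := by
  have himg : (Finset.univ.filter fun s => p (ρ s)) = (Finset.univ.filter p).image ρ.symm := by
    ext s
    simp only [Finset.mem_filter, Finset.mem_univ, true_and, Finset.mem_image]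
    constructor
    · intro h
      exact ⟨ρ s, h, ρ.symm_apply_apply s⟩
    · rintro ⟨t, ht, rfl⟩
      simpa using ht
  rw [himg, Finset.card_image_of_injective _ ρ.symm.injective]

lemma class1_core (ρ : Equiv.Perm (Fin n)) (hav : AvoidsAll ρ [p231, p312, p321]) (k : Fin n)
    (hc : (k : ℕ) + 1 < (ρ k : ℕ)) {p q : Fin n} (hkp : k < p) (hkq : k < q) (hpq : p < q)
    (hρp : (ρ p : ℕ) ≤ (k : ℕ) + 1) (hρq : (ρ q : ℕ) ≤ (k : ℕ) + 1) : False := by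
  have hkρp : ρ p < ρ k := Fin.lt_def.mpr (by omega)
  have hkρq : ρ q < ρ k := Fin.lt_def.mpr (by omega)
  have hne : ρ p ≠ ρ q := fun e => (ne_of_lt hpq) (ρ.injective e)
  rcases hne.lt_or_gt with h | h
  · exact hav p312 (by simp) (containsPattern_of_triple ρ p312 hkp hpq
      (iff_of_false (by decide) (lt_asymm hkρp))
      (iff_of_false (by decide) (lt_asymm hkρq))
      (iff_of_true (by decide) h))
  · exact hav p321 (by simp) (containsPattern_of_triple ρ p321 hkp hpq
      (iff_of_false (by decide) (lt_asymm hkρp))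
      (iff_of_false (by decide) (lt_asymm hkρq))
      (iff_of_false (by decide) (lt_asymm h)))

lemma class1 (ρ : Equiv.Perm (Fin n)) (hav : AvoidsAll ρ [p231, p312, p321]) (k : Fin n) :
    (ρ k : ℕ) ≤ (k : ℕ) + 1 := by
  by_contra hc
  push_neg at hc
  have hc' : (k : ℕ) + 1 < (ρ k : ℕ) := hc
  have hk1n : (k : ℕ) + 1 < n := lt_trans hc' (ρ k).isLt
  set K1 : Fin n := ⟨(k : ℕ) + 1, hk1n⟩ with hK1
  have hV : (Finset.univ.filter fun s => ρ s ≤ K1).card = (k : ℕ) + 2 := by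
    rw [card_filter_perm ρ (fun t => t ≤ K1), my_card_filter_le]
  have hsplit := Finset.card_filter_add_card_filter_not
    (s := Finset.univ.filter fun s => ρ s ≤ K1) (p := fun s => s ≤ k)
  rw [hV] at hsplit
  have hBsub : ((Finset.univ.filter fun s => ρ s ≤ K1).filter fun s => s ≤ k)
      ⊆ (Finset.Iic k).erase k := by
    intro s hs
    simp only [Finset.mem_filter, Finset.mem_univ, true_and] at hs
    rw [Finset.mem_erase, Finset.mem_Iic]
    refine ⟨?_, hs.2⟩
    intro he
    subst he
    have h2 := hs.1
    rw [Fin.le_def] at h2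
    simp only [hK1] at h2
    omega
  have herase : ((Finset.Iic k).erase k).card = (k : ℕ) := by
    rw [Finset.card_erase_of_mem (by simp), Fin.card_Iic]
    omega
  have hBcard : ((Finset.univ.filter fun s => ρ s ≤ K1).filter fun s => s ≤ k).card
      ≤ (k : ℕ) := le_trans (Finset.card_le_card hBsub) (le_of_eq herase)
  have hA : 1 < ((Finset.univ.filter fun s => ρ s ≤ K1).filter fun s => ¬ s ≤ k).card := by
    omega
  obtain ⟨p, hp, q, hq, hpq0⟩ := Finset.one_lt_card.mp hA
  simp only [Finset.mem_filter, Finset.mem_univ, true_and, not_le] at hp hq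
  have hρpv : (ρ p : ℕ) ≤ (k : ℕ) + 1 := Fin.le_def.mp hp.1
  have hρqv : (ρ q : ℕ) ≤ (k : ℕ) + 1 := Fin.le_def.mp hq.1
  rcases hpq0.lt_or_gt with hpq | hpq
  · exact class1_core ρ hav k hc' hp.2 hq.2 hpq hρpv hρqv
  · exact class1_core ρ hav k hc' hq.2 hp.2 hpq hρqv hρpv

lemma class2_core (ρ : Equiv.Perm (Fin n)) (hav : AvoidsAll ρ [p231, p312, p321]) (k : Fin n)
    (hc : (ρ k : ℕ) + 1 < (k : ℕ)) {p q : Fin n} (hpk : p < k) (hqk : q < k) (hpq : p < q)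
    (hρp : (k : ℕ) - 1 ≤ (ρ p : ℕ)) (hρq : (k : ℕ) - 1 ≤ (ρ q : ℕ)) : False := by
  have hkρp : ρ k < ρ p := Fin.lt_def.mpr (by omega)
  have hkρq : ρ k < ρ q := Fin.lt_def.mpr (by omega)
  have hne : ρ p ≠ ρ q := fun e => (ne_of_lt hpq) (ρ.injective e)
  rcases hne.lt_or_gt with h | h
  · exact hav p231 (by simp) (containsPattern_of_triple ρ p231 hpq hqk
      (iff_of_true (by decide) h)
      (iff_of_false (by decide) (lt_asymm hkρp))
      (iff_of_false (by decide) (lt_asymm hkρq)))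
  · exact hav p321 (by simp) (containsPattern_of_triple ρ p321 hpq hqk
      (iff_of_false (by decide) (lt_asymm h))
      (iff_of_false (by decide) (lt_asymm hkρp))
      (iff_of_false (by decide) (lt_asymm hkρq)))

lemma class2 (ρ : Equiv.Perm (Fin n)) (hav : AvoidsAll ρ [p231, p312, p321]) (k : Fin n) :
    (k : ℕ) ≤ (ρ k : ℕ) + 1 := by
  by_contra hc
  push_neg at hc
  have hc' : (ρ k : ℕ) + 1 < (k : ℕ) := hc
  have hkm : (k : ℕ) - 1 < n := lt_trans (by omega) k.isLt
  set K1 : Fin n := ⟨(k : ℕ) - 1, hkm⟩ with hK1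
  have hV : (Finset.univ.filter fun s => K1 ≤ ρ s).card = n - ((k : ℕ) - 1) := by
    rw [card_filter_perm ρ (fun t => K1 ≤ t), my_card_filter_ge]
  have hsplit := Finset.card_filter_add_card_filter_not
    (s := Finset.univ.filter fun s => K1 ≤ ρ s) (p := fun s => k ≤ s)
  rw [hV] at hsplit
  have hBsub : ((Finset.univ.filter fun s => K1 ≤ ρ s).filter fun s => k ≤ s)
      ⊆ (Finset.Ici k).erase k := by
    intro s hs
    simp only [Finset.mem_filter, Finset.mem_univ, true_and] at hs
    rw [Finset.mem_erase, Finset.mem_Ici]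
    refine ⟨?_, hs.2⟩
    intro he
    subst he
    have h2 := hs.1
    rw [Fin.le_def] at h2
    simp only [hK1] at h2
    omega
  have herase : ((Finset.Ici k).erase k).card = n - (k : ℕ) - 1 := by
    rw [Finset.card_erase_of_mem (by simp), Fin.card_Ici]
  have hBcard : ((Finset.univ.filter fun s => K1 ≤ ρ s).filter fun s => k ≤ s).card
      ≤ n - (k : ℕ) - 1 := le_trans (Finset.card_le_card hBsub) (le_of_eq herase)
  have hkn : (k : ℕ) < n := k.isLt
  have hA : 1 < ((Finset.univ.filter fun s => K1 ≤ ρ s).filter fun s => ¬ k ≤ s).card := by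
    omega
  obtain ⟨p, hp, q, hq, hpq0⟩ := Finset.one_lt_card.mp hA
  simp only [Finset.mem_filter, Finset.mem_univ, true_and, not_le] at hp hq
  have hρpv : (k : ℕ) - 1 ≤ (ρ p : ℕ) := by
    have := hp.1; rw [Fin.le_def] at this; simpa [hK1] using this
  have hρqv : (k : ℕ) - 1 ≤ (ρ q : ℕ) := by
    have := hq.1; rw [Fin.le_def] at this; simpa [hK1] using this
  rcases hpq0.lt_or_gt with hpq | hpq
  · exact class2_core ρ hav k hc' hp.2 hq.2 hpq hρpv hρqv
  · exact class2_core ρ hav k hc' hq.2 hp.2 hpq hρqv hρpv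

end Class
section Class34

variable {n : ℕ}

lemma class3 (ρ : Equiv.Perm (Fin n)) (hav : AvoidsAll ρ [p231, p312, p321]) (k : Fin n)
    (hk : (ρ k : ℕ) = (k : ℕ) + 1) (j : Fin n) (hj : (j : ℕ) = (k : ℕ) + 1) :
    ρ j = k := by
  by_contra hρj
  set p := ρ.symm k with hp
  have hρp : ρ p = k := ρ.apply_symm_apply k
  have hp1 : (k : ℕ) ≤ (p : ℕ) + 1 := by
    have := class1 ρ hav p; rw [hρp] at this; omega
  have hp2 : (p : ℕ) ≤ (k : ℕ) + 1 := by
    have := class2 ρ hav p; rw [hρp] at this; omega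
  have hpk : p ≠ k := by
    intro he; rw [he] at hρp; have := congrArg Fin.val hρp; omega
  have hpj : p ≠ j := by
    intro he; rw [he] at hρp; exact hρj hρp
  have hpval : (p : ℕ) = (k : ℕ) - 1 ∧ 1 ≤ (k : ℕ) := by
    have h1 : (p : ℕ) ≠ (k : ℕ) := fun e => hpk (Fin.ext e)
    have h2 : (p : ℕ) ≠ (j : ℕ) := fun e => hpj (Fin.ext e)
    omega
  -- value of ρ j is k + 2
  have hρjv : (ρ j : ℕ) = (k : ℕ) + 2 := by
    have h1 := class1 ρ hav j
    have h2 := class2 ρ hav j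
    have h3 : ρ j ≠ ρ k := fun e => by
      have := ρ.injective e
      rw [this] at hj; omega
    have h4 : (ρ j : ℕ) ≠ (ρ k : ℕ) := fun e => h3 (Fin.ext e)
    have h5 : (ρ j : ℕ) ≠ (k : ℕ) := fun e => hρj (Fin.ext e)
    omega
  have hkn : (k : ℕ) < n := k.isLt
  have hkm : (k : ℕ) - 1 < n := by omega
  set Km : Fin n := ⟨(k : ℕ) - 1, hkm⟩ with hKm
  have hV : (Finset.univ.filter fun s => ρ s ≤ Km).card = (k : ℕ) := by
    rw [card_filter_perm ρ (fun t => t ≤ Km), my_card_filter_le]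
    simp only [hKm]
    omega
  have hsub : (Finset.univ.filter fun s => ρ s ≤ Km) ⊆ (Finset.univ.filter fun s => s < Km) := by
    intro s hs
    simp only [Finset.mem_filter, Finset.mem_univ, true_and, Fin.le_def, Fin.lt_def] at hs ⊢
    have hKmv : ((⟨(k : ℕ) - 1, hkm⟩ : Fin n) : ℕ) = (k : ℕ) - 1 := rfl
    have hc2 := class2 ρ hav s
    have hsp : (s : ℕ) ≠ (p : ℕ) := by
      intro he
      have : s = p := Fin.ext he
      rw [this, hρp] at hs
      omega
    have hsk : (s : ℕ) ≠ (k : ℕ) := by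
      intro he
      have : s = k := Fin.ext he
      rw [this] at hs
      omega
    omega
  have hVcard : (Finset.univ.filter fun s : Fin n => s < Km).card = (k : ℕ) - 1 := by
    rw [show (Finset.univ.filter fun s : Fin n => s < Km) = Finset.Iio Km from by ext s; simp,
      Fin.card_Iio]
  have := Finset.card_le_card hsub
  rw [hV, hVcard] at this
  omega

lemma class4 (ρ : Equiv.Perm (Fin n)) (hav : AvoidsAll ρ [p231, p312, p321]) :
    ∀ m : ℕ, ∀ k j : Fin n, (k : ℕ) = m → (j : ℕ) = (k : ℕ) + 1 → ρ j = k → ρ k = j := by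
  intro m
  induction m using Nat.strong_induction_on with
  | _ m ih =>
    intro k j hkm hj hρj
    have hne : ρ k ≠ k := fun e => by
      have := ρ.injective (hρj.trans e.symm)
      rw [this] at hj; omega
    have h1 := class1 ρ hav k
    have h2 := class2 ρ hav k
    rcases Nat.eq_or_lt_of_le h1 with he | hlt
    · exact Fin.ext (by omega)
    · have hnev : (ρ k : ℕ) ≠ (k : ℕ) := fun e => hne (Fin.ext e)
      have hρkv : (ρ k : ℕ) = (k : ℕ) - 1 ∧ 1 ≤ (k : ℕ) := by omega
      have := ih (ρ k : ℕ) (by omega) (ρ k) k rfl (by omega) rfl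
      -- this : ρ (ρ k) = k
      have h3 : ρ (ρ k) = ρ j := this.trans hρj.symm
      have h4 : ρ k = j := ρ.injective h3
      have := congrArg Fin.val h4
      omega

end Class34
def Dcond {n : ℕ} (f : Fin n → Fin n) : Prop :=
  ∀ i : Fin n, (f i : ℕ) ≤ (i : ℕ) ∨
    ((f i : ℕ) = (i : ℕ) + 1 ∧ ∀ j : Fin n, (j : ℕ) = (i : ℕ) + 1 → (f j : ℕ) ≤ (i : ℕ))

section Dir1

variable {n : ℕ}

lemma dcond_of_park (f : Fin n → Fin n) (ρ : Equiv.Perm (Fin n))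
    (hpark : IsParkingPerm f ρ) (hav : AvoidsAll ρ [p231, p312, p321]) : Dcond f := by
  intro k
  obtain ⟨hC2, hC3⟩ := keyB_constraints f ρ hpark k
  set p := ρ.symm k with hp
  have hρp : ρ p = k := ρ.apply_symm_apply k
  have hp1 : (k : ℕ) ≤ (p : ℕ) + 1 := by
    have := class1 ρ hav p; rw [hρp] at this; omega
  have hp2 : (p : ℕ) ≤ (k : ℕ) + 1 := by
    have := class2 ρ hav p; rw [hρp] at this; omega
  rcases Nat.lt_or_ge (k : ℕ) (p : ℕ) with hlt | hge
  · -- p = k + 1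
    have hpval : (p : ℕ) = (k : ℕ) + 1 := by omega
    have hρk : ρ k = p := class4 ρ hav (k : ℕ) k p rfl hpval hρp
    right
    constructor
    · have hnle : ¬ (f k : ℕ) ≤ (k : ℕ) := by
        intro hle
        have := hC3 k hle (by rw [hρk]; omega)
        omega
      omega
    · intro j hj
      have hjp : j = p := Fin.ext (by omega)
      have hkk := (keyB_constraints f ρ hpark p).1
      have hsymm : ρ.symm p = k := by
        rw [← hρk]; exact ρ.symm_apply_apply k
      rw [hsymm] at hkk
      rw [hjp]
      exact hkk
  · left
    omega

end Dir1

section Dir2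

variable {n : ℕ}

def rho (f : Fin n → Fin n) : Fin n → Fin n := fun i =>
  if (f i : ℕ) = (i : ℕ) + 1 then f i
  else if 0 < (i : ℕ) ∧ (f ⟨(i : ℕ) - 1, Nat.lt_of_le_of_lt (Nat.sub_le _ _) i.isLt⟩ : ℕ)
      = (i : ℕ) then ⟨(i : ℕ) - 1, Nat.lt_of_le_of_lt (Nat.sub_le _ _) i.isLt⟩
  else i

lemma rho_eq_A (f : Fin n → Fin n) (i : Fin n) (h : (f i : ℕ) = (i : ℕ) + 1) :
    rho f i = f i := by rw [rho, if_pos h]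

lemma rho_eq_B (f : Fin n → Fin n) (i : Fin n) (h : ¬ (f i : ℕ) = (i : ℕ) + 1)
    (h2 : 0 < (i : ℕ))
    (h3 : (f ⟨(i : ℕ) - 1, Nat.lt_of_le_of_lt (Nat.sub_le _ _) i.isLt⟩ : ℕ) = (i : ℕ)) :
    rho f i = ⟨(i : ℕ) - 1, Nat.lt_of_le_of_lt (Nat.sub_le _ _) i.isLt⟩ := by
  rw [rho, if_neg h, if_pos ⟨h2, h3⟩]

lemma rho_eq_C (f : Fin n → Fin n) (i : Fin n) (h : ¬ (f i : ℕ) = (i : ℕ) + 1)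
    (h2 : ¬ (0 < (i : ℕ) ∧ (f ⟨(i : ℕ) - 1, Nat.lt_of_le_of_lt (Nat.sub_le _ _) i.isLt⟩ : ℕ)
      = (i : ℕ))) : rho f i = i := by
  rw [rho, if_neg h, if_neg h2]

lemma rho_bound1 (f : Fin n → Fin n) (i : Fin n) : (rho f i : ℕ) ≤ (i : ℕ) + 1 := by
  rw [rho]
  split
  · omega
  · split
    · simp; omega
    · omega

lemma rho_bound2 (f : Fin n → Fin n) (i : Fin n) : (i : ℕ) ≤ (rho f i : ℕ) + 1 := by
  rw [rho]
  split
  · omega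
  · split
    · rename_i h2
      simp
      omega
    · omega

lemma rho_invol (f : Fin n → Fin n) (hD : Dcond f) : Function.Involutive (rho f) := by
  intro i
  by_cases hA : (f i : ℕ) = (i : ℕ) + 1
  · rw [rho_eq_A f i hA]
    have hfup : (f (f i) : ℕ) ≤ (i : ℕ) := by
      rcases hD i with h | ⟨_, h⟩
      · omega
      · exact h (f i) hA
    have hnA : ¬ (f (f i) : ℕ) = (f i : ℕ) + 1 := by omega
    have hpos : 0 < (f i : ℕ) := by omega
    have harg : (⟨(f i : ℕ) - 1, Nat.lt_of_le_of_lt (Nat.sub_le _ _) (f i).isLt⟩ : Fin n)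
        = i := by
      apply Fin.ext
      show (f i : ℕ) - 1 = (i : ℕ)
      omega
    rw [rho_eq_B f (f i) hnA hpos (by rw [harg])]
    exact harg
  · by_cases hB : 0 < (i : ℕ) ∧
      (f ⟨(i : ℕ) - 1, Nat.lt_of_le_of_lt (Nat.sub_le _ _) i.isLt⟩ : ℕ) = (i : ℕ)
    · rw [rho_eq_B f i hA hB.1 hB.2]
      set jp : Fin n := ⟨(i : ℕ) - 1, Nat.lt_of_le_of_lt (Nat.sub_le _ _) i.isLt⟩ with hjp
      have hjpv : (jp : ℕ) = (i : ℕ) - 1 := rfl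
      have hAjp : (f jp : ℕ) = (jp : ℕ) + 1 := by
        have h5 := hB.2
        omega
      rw [rho_eq_A f jp hAjp]
      apply Fin.ext
      exact hB.2
    · rw [rho_eq_C f i hA hB, rho_eq_C f i hA hB]

lemma rho_H1 (f : Fin n → Fin n) (hD : Dcond f) (i : Fin n) :
    (f i : ℕ) ≤ (rho f i : ℕ) := by
  by_cases hA : (f i : ℕ) = (i : ℕ) + 1
  · rw [rho_eq_A f i hA]
  · by_cases hB : 0 < (i : ℕ) ∧
      (f ⟨(i : ℕ) - 1, Nat.lt_of_le_of_lt (Nat.sub_le _ _) i.isLt⟩ : ℕ) = (i : ℕ)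
    · rw [rho_eq_B f i hA hB.1 hB.2]
      set jp : Fin n := ⟨(i : ℕ) - 1, Nat.lt_of_le_of_lt (Nat.sub_le _ _) i.isLt⟩ with hjp
      have hjval : (jp : ℕ) = (i : ℕ) - 1 := rfl
      have h5 := hB.2
      rcases hD jp with h | ⟨_, h⟩
      · exfalso
        omega
      · have h6 := h i (by omega)
        omega
    · rw [rho_eq_C f i hA hB]
      rcases hD i with h | ⟨h, _⟩
      · exact h
      · exact absurd h hA

lemma rho_H2 (f : Fin n → Fin n) (hD : Dcond f) (k s : Fin n)
    (h1 : (f k : ℕ) ≤ (s : ℕ)) (h2 : (k : ℕ) ≤ (rho f s : ℕ)) :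
    (rho f k : ℕ) ≤ (s : ℕ) := by
  by_cases hA : (f k : ℕ) = (k : ℕ) + 1
  · rw [rho_eq_A f k hA]
    omega
  · by_cases hB : 0 < (k : ℕ) ∧
      (f ⟨(k : ℕ) - 1, Nat.lt_of_le_of_lt (Nat.sub_le _ _) k.isLt⟩ : ℕ) = (k : ℕ)
    · rw [rho_eq_B f k hA hB.1 hB.2]
      show (k : ℕ) - 1 ≤ (s : ℕ)
      by_contra hc
      push_neg at hc
      have hb1 := rho_bound1 f s
      omega
    · rw [rho_eq_C f k hA hB]
      by_contra hc
      push_neg at hc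
      have hb1 := rho_bound1 f s
      -- rho f s ≥ k, rho f s ≤ s + 1 ≤ k, so rho f s = k as values
      have hval : (rho f s : ℕ) = (k : ℕ) := by omega
      have heq : rho f s = rho f k := by
        rw [rho_eq_C f k hA hB]; exact Fin.ext hval
      have := rho_invol f hD
      have hsk : s = k := by
        have e1 := congrArg (rho f) heq
        rw [this s, this k] at e1
        exact e1
      omega

end Dir2
section Assemble

variable {n : ℕ}

lemma avoids_of_bounds (ρ : Equiv.Perm (Fin n)) (h1 : ∀ s : Fin n, (ρ s : ℕ) ≤ (s : ℕ) + 1)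
    (h2 : ∀ s : Fin n, (s : ℕ) ≤ (ρ s : ℕ) + 1) : AvoidsAll ρ [p231, p312, p321] := by
  intro σ hσ hcont
  obtain ⟨g, hg, hiff⟩ := hcont
  have h01 : g 0 < g 1 := hg (by decide)
  have h12 : g 1 < g 2 := hg (by decide)
  have hv01 := Fin.lt_def.mp h01
  have hv12 := Fin.lt_def.mp h12
  have hρ20 : ρ (g 2) < ρ (g 0) := by
    simp only [List.mem_cons, List.mem_singleton, List.not_mem_nil, or_false] at hσ
    rcases hσ with rfl | rfl | rfl
    · exact (hiff 2 0).mp (by decide)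
    · exact (hiff 2 0).mp (by decide)
    · exact (hiff 2 0).mp (by decide)
  have e1 := h1 (g 0)
  have e2 := h2 (g 2)
  have := Fin.lt_def.mp hρ20
  omega

lemma park_iff_dcond (f : Fin n → Fin n) :
    (IsParkingFunction f ∧ ∃ ρ : Equiv.Perm (Fin n),
      IsParkingPerm f ρ ∧ AvoidsAll ρ [p231, p312, p321]) ↔ Dcond f := by
  constructor
  · rintro ⟨_, ρ, hpark, hav⟩
    exact dcond_of_park f ρ hpark hav
  · intro hD
    set ρp : Equiv.Perm (Fin n) :=
      ⟨rho f, rho f, fun x => rho_invol f hD x, fun x => rho_invol f hD x⟩ with hρpdef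
    have hcoe : ∀ i, ρp i = rho f i := fun i => rfl
    have hpark : IsParkingPerm f ρp := by
      rw [IsParkingPerm]
      have hkey := keyA f (rho f) (rho_invol f hD) (fun k => rho_H1 f hD k)
        (fun k s a b => rho_H2 f hD k s a b) n le_rfl
      rw [hkey]
      congr 1
      funext s
      rw [if_pos (rho f s).isLt, hcoe s]
    have hav : AvoidsAll ρp [p231, p312, p321] :=
      avoids_of_bounds ρp (fun s => rho_bound1 f s) (fun s => rho_bound2 f s)
    refine ⟨?_, ρp, hpark, hav⟩
    intro i
    have hsub : (Finset.Iic i).image ρp ⊆ Finset.univ.filter fun j => f j ≤ i := by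
      intro t ht
      simp only [Finset.mem_image, Finset.mem_Iic] at ht
      obtain ⟨s, hs, rfl⟩ := ht
      simp only [Finset.mem_filter, Finset.mem_univ, true_and]
      rw [Fin.le_def]
      have hH1 := rho_H1 f hD (ρp s)
      have hinv : rho f (ρp s) = s := rho_invol f hD s
      rw [hinv] at hH1
      have hsi := Fin.le_def.mp hs
      omega
    have hcard : ((Finset.Iic i).image ρp).card = (i : ℕ) + 1 := by
      rw [Finset.card_image_of_injective _ ρp.injective, Fin.card_Iic]
    calc (i : ℕ) + 1 = ((Finset.Iic i).image ρp).card := hcard.symm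
    _ ≤ _ := Finset.card_le_card hsub

end Assemble
section Count

instance dcondDec {n : ℕ} : DecidablePred (Dcond (n := n)) := fun f => by
  unfold Dcond; exact inferInstance

def pcF (n : ℕ) : ℕ := (Finset.univ.filter fun f : Fin n → Fin n => Dcond f).card

lemma dcond_le {n : ℕ} (f : Fin n → Fin n) (hD : Dcond f) (i : Fin n) :
    (f i : ℕ) ≤ (i : ℕ) + 1 := by
  rcases hD i with h | ⟨h, _⟩ <;> omega

lemma pk_eq_pcF (n : ℕ) : pk n [p231, p312, p321] = pcF n := by
  rw [pk, pcF]
  rw [Nat.card_congr (Equiv.subtypeEquivRight fun f => by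
    constructor
    · rintro ⟨h1, h2⟩
      exact (park_iff_dcond f).mp ⟨h1, h2⟩
    · intro hD
      obtain ⟨h1, h2⟩ := (park_iff_dcond f).mpr hD
      exact ⟨h1, h2⟩)]
  rw [Nat.card_eq_fintype_card, Fintype.card_subtype]

lemma pcF_zero : pcF 0 = 1 := by decide

lemma pcF_one : pcF 1 = 1 := by decide

end Count
section Rec

variable (n : ℕ)

private def NN : Fin (n+2) := ⟨n, by omega⟩

private def ΦA : (Fin (n+2) → Fin (n+2)) → Fin (n+2) × (Fin (n+1) → Fin (n+1)) :=
  fun f => (f (Fin.last (n+1)), fun i =>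
    if h : (f (Fin.castSucc i) : ℕ) < n + 1 then ⟨(f (Fin.castSucc i) : ℕ), h⟩ else i)

private def ΨA : Fin (n+2) × (Fin (n+1) → Fin (n+1)) → (Fin (n+2) → Fin (n+2)) :=
  fun p j => if h : (j : ℕ) < n + 1 then Fin.castSucc (p.2 ⟨(j : ℕ), h⟩) else p.1

lemma cardA : ((Finset.univ.filter fun f : Fin (n+2) → Fin (n+2) => Dcond f).filter
      fun f => (f (NN n) : ℕ) ≤ n).card = (n + 2) * pcF (n+1) := by
  have hprod : (n + 2) * pcF (n+1) =
      ((Finset.univ : Finset (Fin (n+2))) ×ˢ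
        (Finset.univ.filter fun g : Fin (n+1) → Fin (n+1) => Dcond g)).card := by
    rw [Finset.card_product, Finset.card_univ, Fintype.card_fin, pcF]
  rw [hprod]
  apply Finset.card_nbij' (ΦA n) (ΨA n)
  · -- forward membership
    intro f hf
    simp only [Finset.mem_coe, Finset.mem_filter, Finset.mem_univ, true_and] at hf
    obtain ⟨hD, hle⟩ := hf
    have hlt : ∀ i : Fin (n+1), (f (Fin.castSucc i) : ℕ) < n + 1 := by
      intro i
      have h1 := dcond_le f hD (Fin.castSucc i)
      have hci : (Fin.castSucc i : ℕ) = (i : ℕ) := rfl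
      by_cases hi : (i : ℕ) = n
      · have : Fin.castSucc i = NN n := Fin.ext (by rw [hci, hi]; rfl)
        rw [this]
        omega
      · have : (i : ℕ) < n := by omega
        omega
    have hgval : ∀ i : Fin (n+1), ((ΦA n f).2 i : ℕ) = (f (Fin.castSucc i) : ℕ) := by
      intro i
      simp only [ΦA, dif_pos (hlt i)]
    rw [Finset.mem_coe, Finset.mem_product]
    refine ⟨Finset.mem_univ _, ?_⟩
    simp only [Finset.mem_filter, Finset.mem_univ, true_and]
    intro i
    rcases hD (Fin.castSucc i) with h | ⟨h1, h2⟩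
    · left
      rw [hgval i]
      exact h
    · right
      constructor
      · rw [hgval i]; exact h1
      · intro j' hj'
        rw [hgval j']
        exact h2 (Fin.castSucc j') hj'
  · -- backward membership
    rintro ⟨v, g⟩ hp
    rw [Finset.mem_coe, Finset.mem_product] at hp
    simp only [Finset.mem_filter, Finset.mem_univ, true_and] at hp
    have hD := hp
    simp only [Finset.mem_coe, Finset.mem_filter, Finset.mem_univ, true_and]
    have hval : ∀ j : Fin (n+2), (hj : (j : ℕ) < n + 1) →
        (ΨA n (v, g) j : ℕ) = (g ⟨(j : ℕ), hj⟩ : ℕ) := by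
      intro j hj
      simp only [ΨA, dif_pos hj, Fin.coe_castSucc]
    constructor
    · -- Dcond
      intro i
      by_cases hi : (i : ℕ) < n + 1
      · rcases hD ⟨(i : ℕ), hi⟩ with h | ⟨h1, h2⟩
        · left
          rw [hval i hi]
          exact h
        · right
          have hgb : ((g ⟨(i : ℕ), hi⟩ : ℕ)) < n + 1 := (g _).isLt
          constructor
          · rw [hval i hi]; exact h1
          · intro j hj
            have hii : ((⟨(i : ℕ), hi⟩ : Fin (n+1)) : ℕ) = (i : ℕ) := rfl
            have hjlt : (j : ℕ) < n + 1 := by omega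
            rw [hval j hjlt]
            exact h2 ⟨(j : ℕ), hjlt⟩ hj
      · left
        have : ΨA n (v, g) i = v := by simp only [ΨA, dif_neg hi]
        rw [this]
        have := v.isLt
        omega
    · -- value at NN
      have hNN : ((NN n : Fin (n+2)) : ℕ) < n + 1 := by simp [NN]
      rw [hval (NN n) hNN]
      have := (g ⟨(NN n : ℕ), hNN⟩).isLt
      have hNv : ((NN n : Fin (n+2)) : ℕ) = n := rfl
      omega
  · -- left inverse
    intro f hf
    simp only [Finset.mem_coe, Finset.mem_filter, Finset.mem_univ, true_and] at hf
    obtain ⟨hD, hle⟩ := hf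
    have hlt : ∀ i : Fin (n+1), (f (Fin.castSucc i) : ℕ) < n + 1 := by
      intro i
      have h1 := dcond_le f hD (Fin.castSucc i)
      have hci : (Fin.castSucc i : ℕ) = (i : ℕ) := rfl
      by_cases hi : (i : ℕ) = n
      · have : Fin.castSucc i = NN n := Fin.ext (by rw [hci, hi]; rfl)
        rw [this]
        omega
      · have : (i : ℕ) < n := by omega
        omega
    funext j
    by_cases hj : (j : ℕ) < n + 1
    · have e1 : ΨA n (ΦA n f) j = Fin.castSucc ((ΦA n f).2 ⟨(j : ℕ), hj⟩) := by
        simp only [ΨA, dif_pos hj]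
      rw [e1]
      apply Fin.ext
      rw [Fin.coe_castSucc]
      have e2 : Fin.castSucc (⟨(j : ℕ), hj⟩ : Fin (n+1)) = j := Fin.ext rfl
      have := hlt ⟨(j : ℕ), hj⟩
      simp only [ΦA, dif_pos this]
      rw [e2]
    · have hjl : j = Fin.last (n+1) := Fin.ext (by
        have := j.isLt
        simp only [Fin.val_last]
        omega)
      have e1 : ΨA n (ΦA n f) j = (ΦA n f).1 := by
        simp only [ΨA, dif_neg hj]
      rw [e1, hjl]
      rfl
  · -- right inverse
    rintro ⟨v, g⟩ hp
    have h1 : ΨA n (v, g) (Fin.last (n+1)) = v := by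
      simp only [ΨA]
      rw [dif_neg (by simp)]
    refine Prod.ext ?_ ?_
    · simp only [ΦA]
      exact h1
    · funext i
      have hci : ((Fin.castSucc i : Fin (n+2)) : ℕ) = (i : ℕ) := rfl
      have hcl : ((Fin.castSucc i : Fin (n+2)) : ℕ) < n + 1 := by
        rw [hci]; exact i.isLt
      have e1 : ΨA n (v, g) (Fin.castSucc i) = Fin.castSucc (g ⟨(i : ℕ), i.isLt⟩) := by
        simp only [ΨA, dif_pos hcl]
        rfl
      have e2 : (⟨(i : ℕ), i.isLt⟩ : Fin (n+1)) = i := Fin.ext rfl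
      rw [e2] at e1
      simp only [ΦA]
      rw [dif_pos (by rw [e1, Fin.coe_castSucc]; exact (g i).isLt)]
      apply Fin.ext
      simp only [e1, Fin.coe_castSucc]

end Rec
section RecB

variable (n : ℕ)

private def ΦB : (Fin (n+2) → Fin (n+2)) → Fin (n+1) × (Fin n → Fin n) :=
  fun f => (if h : (f (Fin.last (n+1)) : ℕ) < n + 1 then ⟨(f (Fin.last (n+1)) : ℕ), h⟩
      else ⟨0, by omega⟩,
    fun i => if h : (f (Fin.castSucc (Fin.castSucc i)) : ℕ) < n
      then ⟨(f (Fin.castSucc (Fin.castSucc i)) : ℕ), h⟩ else i)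

private def ΨB : Fin (n+1) × (Fin n → Fin n) → (Fin (n+2) → Fin (n+2)) :=
  fun p j => if h : (j : ℕ) < n then Fin.castSucc (Fin.castSucc (p.2 ⟨(j : ℕ), h⟩))
    else if (j : ℕ) = n then ⟨n+1, by omega⟩ else Fin.castSucc p.1

lemma memB_facts (f : Fin (n+2) → Fin (n+2)) (hD : Dcond f)
    (hgt : ¬ (f (NN n) : ℕ) ≤ n) :
    (f (NN n) : ℕ) = n + 1 ∧ (f (Fin.last (n+1)) : ℕ) ≤ n ∧
      ∀ i : Fin n, (f (Fin.castSucc (Fin.castSucc i)) : ℕ) < n := by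
  have hNv : ((NN n : Fin (n+2)) : ℕ) = n := rfl
  have hNN : (f (NN n) : ℕ) = n + 1 := by
    have := dcond_le f hD (NN n)
    omega
  have hlast : (f (Fin.last (n+1)) : ℕ) ≤ n := by
    rcases hD (NN n) with h | ⟨_, h2⟩
    · omega
    · have := h2 (Fin.last (n+1)) (by rw [Fin.val_last, hNv])
      omega
  refine ⟨hNN, hlast, ?_⟩
  intro i
  have hci : ((Fin.castSucc (Fin.castSucc i) : Fin (n+2)) : ℕ) = (i : ℕ) := rfl
  have hd := dcond_le f hD (Fin.castSucc (Fin.castSucc i))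
  have hin : (i : ℕ) < n := i.isLt
  rcases Nat.lt_or_ge ((i : ℕ) + 1) n with hlt | hge
  · omega
  · have hieq : (i : ℕ) + 1 = n := by omega
    rcases hD (Fin.castSucc (Fin.castSucc i)) with h | ⟨h1, h2⟩
    · omega
    · exfalso
      have := h2 (NN n) (by rw [hNv, hci]; omega)
      omega

lemma cardB : ((Finset.univ.filter fun f : Fin (n+2) → Fin (n+2) => Dcond f).filter
      fun f => ¬ (f (NN n) : ℕ) ≤ n).card = (n + 1) * pcF n := by
  have hprod : (n + 1) * pcF n =
      ((Finset.univ : Finset (Fin (n+1))) ×ˢ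
        (Finset.univ.filter fun g : Fin n → Fin n => Dcond g)).card := by
    rw [Finset.card_product, Finset.card_univ, Fintype.card_fin, pcF]
  rw [hprod]
  apply Finset.card_nbij' (ΦB n) (ΨB n)
  · -- forward membership
    intro f hf
    simp only [Finset.mem_coe, Finset.mem_filter, Finset.mem_univ, true_and] at hf
    obtain ⟨hD, hgt⟩ := hf
    obtain ⟨hNN, hlast, hlt⟩ := memB_facts n f hD hgt
    have hgval : ∀ i : Fin n, ((ΦB n f).2 i : ℕ) = (f (Fin.castSucc (Fin.castSucc i)) : ℕ) := by
      intro i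
      simp only [ΦB, dif_pos (hlt i)]
    rw [Finset.mem_coe, Finset.mem_product]
    refine ⟨Finset.mem_univ _, ?_⟩
    simp only [Finset.mem_filter, Finset.mem_univ, true_and]
    intro i
    rcases hD (Fin.castSucc (Fin.castSucc i)) with h | ⟨h1, h2⟩
    · left
      rw [hgval i]
      exact h
    · right
      constructor
      · rw [hgval i]; exact h1
      · intro j' hj'
        rw [hgval j']
        exact h2 (Fin.castSucc (Fin.castSucc j')) hj'
  · -- backward membership
    rintro ⟨v, g⟩ hp
    rw [Finset.mem_coe, Finset.mem_product] at hp
    have hD : Dcond g := by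
      have := hp.2
      simp only [Finset.mem_filter, Finset.mem_univ, true_and] at this
      exact this
    simp only [Finset.mem_coe, Finset.mem_filter, Finset.mem_univ, true_and]
    have hval : ∀ j : Fin (n+2), (hj : (j : ℕ) < n) →
        (ΨB n (v, g) j : ℕ) = (g ⟨(j : ℕ), hj⟩ : ℕ) := by
      intro j hj
      simp only [ΨB, dif_pos hj, Fin.coe_castSucc]
    have hvalNN : (ΨB n (v, g) (NN n) : ℕ) = n + 1 := by
      simp only [ΨB, dif_neg (by simp [NN] : ¬ ((NN n : Fin (n+2)) : ℕ) < n)]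
      have hc : ((NN n : Fin (n+2)) : ℕ) = n := rfl
      rw [if_pos hc]
    have hvalL : (ΨB n (v, g) (Fin.last (n+1)) : ℕ) = (v : ℕ) := by
      have h1 : ¬ ((Fin.last (n+1) : Fin (n+2)) : ℕ) < n := by simp
      have h2 : ¬ ((Fin.last (n+1) : Fin (n+2)) : ℕ) = n := by simp
      simp only [ΨB, dif_neg h1, if_neg h2, Fin.coe_castSucc]
    constructor
    · -- Dcond
      intro i
      rcases Nat.lt_or_ge (i : ℕ) n with hi | hi
      · rcases hD ⟨(i : ℕ), hi⟩ with h | ⟨h1, h2⟩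
        · left
          rw [hval i hi]
          exact h
        · right
          have hii : ((⟨(i : ℕ), hi⟩ : Fin n) : ℕ) = (i : ℕ) := rfl
          have hgb : ((g ⟨(i : ℕ), hi⟩ : ℕ)) < n := (g _).isLt
          constructor
          · rw [hval i hi]; exact h1
          · intro j hj
            have hjlt : (j : ℕ) < n := by omega
            rw [hval j hjlt]
            exact h2 ⟨(j : ℕ), hjlt⟩ hj
      · rcases Nat.eq_or_lt_of_le hi with hieq | higt
        · -- i = n
          right
          have hiNN : i = NN n := Fin.ext hieq.symm
          constructor
          · rw [hiNN, hvalNN]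
            rfl
          · intro j hj
            have hjL : j = Fin.last (n+1) := Fin.ext (by rw [Fin.val_last]; omega)
            rw [hjL, hvalL]
            have := v.isLt
            omega
        · -- i = n + 1
          left
          have hiL : i = Fin.last (n+1) := Fin.ext (by
            have := i.isLt
            rw [Fin.val_last]
            omega)
          rw [hiL, hvalL, Fin.val_last]
          have := v.isLt
          omega
    · -- value at NN
      rw [hvalNN]
      omega
  · -- left inverse
    intro f hf
    simp only [Finset.mem_coe, Finset.mem_filter, Finset.mem_univ, true_and] at hf
    obtain ⟨hD, hgt⟩ := hf
    obtain ⟨hNN, hlast, hlt⟩ := memB_facts n f hD hgt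
    funext j
    rcases Nat.lt_or_ge (j : ℕ) n with hj | hj
    · have e1 : ΨB n (ΦB n f) j =
          Fin.castSucc (Fin.castSucc ((ΦB n f).2 ⟨(j : ℕ), hj⟩)) := by
        simp only [ΨB, dif_pos hj]
      rw [e1]
      apply Fin.ext
      have e2 : Fin.castSucc (Fin.castSucc (⟨(j : ℕ), hj⟩ : Fin n)) = j := Fin.ext rfl
      have h3 := hlt ⟨(j : ℕ), hj⟩
      simp only [Fin.coe_castSucc, ΦB, dif_pos h3]
      rw [e2]
    · rcases Nat.eq_or_lt_of_le hj with hjeq | hjgt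
      · have hjNN : j = NN n := Fin.ext hjeq.symm
        have e1 : ΨB n (ΦB n f) j = ⟨n+1, by omega⟩ := by
          simp only [ΨB, dif_neg (by omega : ¬ (j : ℕ) < n)]
          rw [if_pos (by omega : (j : ℕ) = n)]
        rw [e1, hjNN]
        exact Fin.ext (by rw [hNN])
      · have hjL : j = Fin.last (n+1) := Fin.ext (by
          have := j.isLt
          rw [Fin.val_last]
          omega)
        have e1 : ΨB n (ΦB n f) j = Fin.castSucc (ΦB n f).1 := by
          simp only [ΨB, dif_neg (by omega : ¬ (j : ℕ) < n)]
          rw [if_neg (by omega : ¬ (j : ℕ) = n)]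
        rw [e1, hjL]
        apply Fin.ext
        rw [Fin.coe_castSucc]
        simp only [ΦB, dif_pos (by omega : (f (Fin.last (n+1)) : ℕ) < n + 1)]
  · -- right inverse
    rintro ⟨v, g⟩ hp
    have hvL : ΨB n (v, g) (Fin.last (n+1)) = Fin.castSucc v := by
      have h1 : ¬ ((Fin.last (n+1) : Fin (n+2)) : ℕ) < n := by simp
      have h2 : ¬ ((Fin.last (n+1) : Fin (n+2)) : ℕ) = n := by simp
      simp only [ΨB, dif_neg h1, if_neg h2]
    refine Prod.ext ?_ ?_
    · simp only [ΦB, hvL]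
      rw [dif_pos (by rw [Fin.coe_castSucc]; exact v.isLt)]
      exact Fin.ext (by rw [Fin.coe_castSucc])
    · funext i
      have hcl : ((Fin.castSucc (Fin.castSucc i) : Fin (n+2)) : ℕ) < n := i.isLt
      have e1 : ΨB n (v, g) (Fin.castSucc (Fin.castSucc i)) =
          Fin.castSucc (Fin.castSucc (g i)) := by
        simp only [ΨB, dif_pos hcl]
        rfl
      simp only [ΦB]
      rw [dif_pos (by rw [e1]; exact (g i).isLt)]
      apply Fin.ext
      simp only [e1, Fin.coe_castSucc]

end RecB
section Alg

lemma pcF_rec (n : ℕ) : pcF (n+2) = (n+2) * pcF (n+1) + (n+1) * pcF n := by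
  have hsplit := Finset.card_filter_add_card_filter_not
    (s := Finset.univ.filter fun f : Fin (n+2) → Fin (n+2) => Dcond f)
    (p := fun f => (f (NN n) : ℕ) ≤ n)
  rw [cardA n, cardB n] at hsplit
  rw [show pcF (n+2) = (Finset.univ.filter fun f : Fin (n+2) → Fin (n+2) => Dcond f).card
    from rfl] at *
  omega

def Efun (n : ℕ) : ℚ :=
  ∑ k ∈ Finset.range (n+1), (-1 : ℚ) ^ k * ((n.factorial : ℚ) / (k.factorial : ℚ))

lemma Efun_succ (n : ℕ) : Efun (n+1) = (n+1) * Efun n + (-1 : ℚ)^(n+1) := by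
  rw [Efun, Finset.sum_range_succ]
  have h1 : ∀ k ∈ Finset.range (n+1),
      (-1 : ℚ) ^ k * (((n+1).factorial : ℚ) / (k.factorial : ℚ)) =
      ((n : ℚ) + 1) * ((-1 : ℚ) ^ k * ((n.factorial : ℚ) / (k.factorial : ℚ))) := by
    intro k _
    rw [Nat.factorial_succ]
    push_cast
    ring
  rw [Finset.sum_congr rfl h1, ← Finset.mul_sum, ← Efun]
  have h2 : (((n+1).factorial : ℚ) / ((n+1).factorial : ℚ)) = 1 :=
    div_self (by exact_mod_cast Nat.factorial_ne_zero (n+1))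
  rw [h2]
  ring

lemma rhs_eq (n : ℕ) :
    (∑ k ∈ Finset.range (n + 1),
      (-1 : ℚ) ^ k * ((n.factorial : ℚ) / (k.factorial : ℚ)) * ((n : ℚ) - k + 1)) =
    ((n : ℚ) + 2) * Efun n - (-1 : ℚ)^n := by
  have h1 : ∀ k ∈ Finset.range (n+1),
      (-1 : ℚ) ^ k * ((n.factorial : ℚ) / (k.factorial : ℚ)) * ((n : ℚ) - k + 1) =
      ((n : ℚ) + 1) * ((-1 : ℚ) ^ k * ((n.factorial : ℚ) / (k.factorial : ℚ))) -
        ((-1 : ℚ) ^ k * ((n.factorial : ℚ) / (k.factorial : ℚ)) * k) := by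
    intro k _
    ring
  rw [Finset.sum_congr rfl h1, Finset.sum_sub_distrib, ← Finset.mul_sum, ← Efun]
  have hT : (∑ k ∈ Finset.range (n+1),
      (-1 : ℚ) ^ k * ((n.factorial : ℚ) / (k.factorial : ℚ)) * k) =
      - Efun n + (-1 : ℚ)^n := by
    rw [Finset.sum_range_succ']
    have h0 : (-1 : ℚ) ^ 0 * ((n.factorial : ℚ) / ((0).factorial : ℚ)) * (0 : ℕ) = 0 := by
      simp
    rw [h0, add_zero]
    have h2 : ∀ j ∈ Finset.range n,
        (-1 : ℚ) ^ (j+1) * ((n.factorial : ℚ) / ((j+1).factorial : ℚ)) * ((j + 1 : ℕ) : ℚ) =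
        - ((-1 : ℚ) ^ j * ((n.factorial : ℚ) / (j.factorial : ℚ))) := by
      intro j _
      rw [Nat.factorial_succ]
      have hjne : ((j.factorial : ℚ)) ≠ 0 := by
        exact_mod_cast Nat.factorial_ne_zero j
      have hj1ne : ((j : ℚ) + 1) ≠ 0 := by positivity
      push_cast
      field_simp
      ring
    rw [Finset.sum_congr rfl h2, Finset.sum_neg_distrib]
    have h3 : Efun n = (∑ j ∈ Finset.range n,
        (-1 : ℚ) ^ j * ((n.factorial : ℚ) / (j.factorial : ℚ))) +
        (-1 : ℚ)^n * ((n.factorial : ℚ) / (n.factorial : ℚ)) := by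
      rw [Efun, Finset.sum_range_succ]
    have h4 : ((n.factorial : ℚ) / (n.factorial : ℚ)) = 1 :=
      div_self (by exact_mod_cast Nat.factorial_ne_zero n)
    rw [h4, mul_one] at h3
    rw [show (∑ j ∈ Finset.range n, (-1 : ℚ) ^ j * ((n.factorial : ℚ) / (j.factorial : ℚ)))
      = Efun n - (-1 : ℚ)^n by rw [h3]; ring]
    ring
  rw [hT]
  ring

lemma main_count : ∀ n : ℕ, (pcF n : ℚ) = ((n : ℚ) + 2) * Efun n - (-1 : ℚ)^n := by
  intro n
  induction n using Nat.strong_induction_on with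
  | _ n ih =>
    match n with
    | 0 =>
      rw [pcF_zero]
      rw [show Efun 0 = 1 by simp [Efun]]
      norm_num
    | 1 =>
      rw [pcF_one]
      rw [show Efun 1 = 0 by
        rw [Efun, Finset.sum_range_succ, Finset.sum_range_one]
        norm_num [Nat.factorial]]
      norm_num
    | (m+2) =>
      have h1 := ih (m+1) (by omega)
      have h2 := ih m (by omega)
      have hrec := pcF_rec m
      have hcast : (pcF (m+2) : ℚ) = (m+2) * (pcF (m+1) : ℚ) + (m+1) * (pcF m : ℚ) := by
        rw [hrec]
        push_cast
        ring
      rw [hcast, h1, h2, Efun_succ (m+1), Efun_succ m]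
      push_cast
      ring
end Alg


theorem stmt14 (n : ℕ) (hn : 1 ≤ n) :
    (pk n [p231, p312, p321] : ℚ) =
      ∑ k ∈ Finset.range (n + 1),
        (-1 : ℚ) ^ k * ((n.factorial : ℚ) / k.factorial) * ((n : ℚ) - k + 1) := by
  rw [pk_eq_pcF n, rhs_eq n]
  exact main_count n
end
end
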